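/- arXiv:2605.17749 — 3 statements merged into one kernel-verified Lean document; each statement's English description precedes it below -/
import Mathlib

section
/- Let D be a finitely supported probability distribution on pairs (p,y) in [0,1] × {0,1}. For each positive integer m and each i in {0,...,m}, let π_i = E[w_i(p)] and q_i = E[w_i(p)·y]/π_i (when π_i > 0), where w_i(p) = max(1 - |m·p - i|, 0), and define SCDL_m(D) as the maximum over i = 0,...,m of Σ_{j≤i} π_j·max(q_j - (i+1)/m, 0) + Σ_{j>i} π_j·max(i/m - q_j, 0). Then for every positive integer m, SCDL_{2m}(D) ≥ SCDL_m(D). -/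
open Finset

/-- Triangular weight function `w_i(x) = max(1 - |m·x - i|, 0)`. -/
noncomputable def tri (m i : ℕ) (x : ℝ) : ℝ := max (1 - |(m : ℝ) * x - (i : ℝ)|) 0

/-- Bin weight `π_i = E[w_i(p)]` for a finitely supported distribution given by
a finite set `J` of atoms with probabilities `ν` and prediction map `p`. -/
noncomputable def binW {α : Type*} (m : ℕ) (J : Finset α) (ν : α → ℝ) (p : α → ℝ)
    (i : ℕ) : ℝ :=
  ∑ z ∈ J, ν z * tri m i (p z)

/-- Bin conditional mean `q_i = E[w_i(p)·y] / π_i` (zero if `π_i = 0`, by the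
convention of division by zero). -/
noncomputable def binQ {α : Type*} (m : ℕ) (J : Finset α) (ν : α → ℝ) (p y : α → ℝ)
    (i : ℕ) : ℝ :=
  (∑ z ∈ J, ν z * tri m i (p z) * y z) / binW m J ν p i

/-- Soft-binned calibration fixed decision loss at index `i`:
`Σ_{j≤i} π_j·max(q_j - (i+1)/m, 0) + Σ_{j>i} π_j·max(i/m - q_j, 0)`. -/
noncomputable def SCFDL {α : Type*} (m : ℕ) (J : Finset α) (ν : α → ℝ) (p y : α → ℝ)
    (i : ℕ) : ℝ :=
  ∑ j ∈ Finset.range (i + 1), binW m J ν p j * max (binQ m J ν p y j - ((i : ℝ) + 1) / m) 0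
    + ∑ j ∈ Finset.Icc (i + 1) m, binW m J ν p j * max ((i : ℝ) / m - binQ m J ν p y j) 0

/-- `SCDL_m(D) = max_{i=0,...,m} SCFDL_{m,i}(D)`. -/
noncomputable def SCDLm {α : Type*} (m : ℕ) (J : Finset α) (ν : α → ℝ) (p y : α → ℝ) : ℝ :=
  Finset.sup' (Finset.range (m + 1)) (Finset.nonempty_range_iff.mpr (Nat.succ_ne_zero m))
    (SCFDL m J ν p y)

/-- `SCDL(D) = inf over m ∈ {2,4,8,...} of max(SCDL_m(D), 1/m)`. -/
noncomputable def SCDL {α : Type*} (J : Finset α) (ν : α → ℝ) (p y : α → ℝ) : ℝ :=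
  ⨅ k : ℕ, max (SCDLm (2 ^ (k + 1)) J ν p y) (1 / 2 ^ (k + 1))

/-- numerator -/
noncomputable def NB {α : Type*} (m : ℕ) (J : Finset α) (ν : α → ℝ) (p y : α → ℝ)
    (i : ℕ) : ℝ :=
  ∑ z ∈ J, ν z * tri m i (p z) * y z

lemma tri_nonneg (m i : ℕ) (x : ℝ) : 0 ≤ tri m i x := le_max_right _ _

lemma tri_top (m : ℕ) (x : ℝ) (hx : x ≤ 1) : tri m (m+1) x = 0 := by
  unfold tri
  rw [max_eq_right]
  have h1 : (m:ℝ) * x ≤ m := by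
    nlinarith [Nat.cast_nonneg (α := ℝ) m]
  have h2 : (m:ℝ)*x - ((m:ℕ)+1 : ℕ) ≤ -1 := by push_cast; linarith
  have h3 := neg_abs_le ((m:ℝ)*x - ((m+1 : ℕ):ℝ))
  push_cast at h2 h3 ⊢
  linarith

lemma binW_nonneg {α : Type*} (m : ℕ) (J : Finset α) (ν : α → ℝ) (p : α → ℝ)
    (hν : ∀ z ∈ J, 0 ≤ ν z) (i : ℕ) : 0 ≤ binW m J ν p i :=
  Finset.sum_nonneg fun z hz => mul_nonneg (hν z hz) (tri_nonneg _ _ _)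

lemma NB_nonneg {α : Type*} (m : ℕ) (J : Finset α) (ν : α → ℝ) (p y : α → ℝ)
    (hν : ∀ z ∈ J, 0 ≤ ν z) (hy : ∀ z ∈ J, y z = 0 ∨ y z = 1) (i : ℕ) :
    0 ≤ NB m J ν p y i :=
  Finset.sum_nonneg fun z hz => by
    rcases hy z hz with h | h <;>
      simp [h, mul_nonneg (hν z hz) (tri_nonneg m i (p z))]

lemma NB_le_binW {α : Type*} (m : ℕ) (J : Finset α) (ν : α → ℝ) (p y : α → ℝ)
    (hν : ∀ z ∈ J, 0 ≤ ν z) (hy : ∀ z ∈ J, y z = 0 ∨ y z = 1) (i : ℕ) :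
    NB m J ν p y i ≤ binW m J ν p i :=
  Finset.sum_le_sum fun z hz => by
    rcases hy z hz with h | h <;>
      simp [h, mul_nonneg (hν z hz) (tri_nonneg m i (p z))]

lemma binW_top {α : Type*} (m : ℕ) (J : Finset α) (ν : α → ℝ) (p : α → ℝ)
    (hp : ∀ z ∈ J, p z ≤ 1) : binW m J ν p (m+1) = 0 :=
  Finset.sum_eq_zero fun z hz => by rw [tri_top m (p z) (hp z hz), mul_zero]

lemma NB_top {α : Type*} (m : ℕ) (J : Finset α) (ν : α → ℝ) (p y : α → ℝ)
    (hp : ∀ z ∈ J, p z ≤ 1) : NB m J ν p y (m+1) = 0 :=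
  Finset.sum_eq_zero fun z hz => by rw [tri_top m (p z) (hp z hz), mul_zero, zero_mul]

lemma cnv_up (P N c : ℝ) (hP : 0 ≤ P) (hN : 0 ≤ N) (hNP : N ≤ P) :
    P * max (N / P - c) 0 = max (N - c * P) 0 := by
  rcases hP.eq_or_lt with h | h
  · have hN0 : N = 0 := le_antisymm (h ▸ hNP) hN
    simp [← h, hN0]
  · have hne : P ≠ 0 := ne_of_gt h
    rw [mul_max_of_nonneg _ _ hP, mul_zero]
    congr 1
    field_simp

lemma cnv_down (P N c : ℝ) (hP : 0 ≤ P) (hN : 0 ≤ N) (hNP : N ≤ P) :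
    P * max (c - N / P) 0 = max (c * P - N) 0 := by
  rcases hP.eq_or_lt with h | h
  · have hN0 : N = 0 := le_antisymm (h ▸ hNP) hN
    simp [← h, hN0]
  · have hne : P ≠ 0 := ne_of_gt h
    rw [mul_max_of_nonneg _ _ hP, mul_zero]
    congr 1
    field_simp

lemma SCFDL_eq {α : Type*} (m : ℕ) (J : Finset α) (ν : α → ℝ) (p y : α → ℝ)
    (hν : ∀ z ∈ J, 0 ≤ ν z) (hy : ∀ z ∈ J, y z = 0 ∨ y z = 1) (i : ℕ) :
    SCFDL m J ν p y i
      = ∑ j ∈ Finset.range (i + 1), max (NB m J ν p y j - ((i : ℝ) + 1) / m * binW m J ν p j) 0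
        + ∑ j ∈ Finset.Icc (i + 1) m, max ((i : ℝ) / m * binW m J ν p j - NB m J ν p y j) 0 := by
  unfold SCFDL
  congr 1
  · refine Finset.sum_congr rfl fun j _ => ?_
    rw [show binQ m J ν p y j = NB m J ν p y j / binW m J ν p j from rfl]
    exact cnv_up _ _ _ (binW_nonneg m J ν p hν j) (NB_nonneg m J ν p y hν hy j)
      (NB_le_binW m J ν p y hν hy j)
  · refine Finset.sum_congr rfl fun j _ => ?_
    rw [show binQ m J ν p y j = NB m J ν p y j / binW m J ν p j from rfl]
    exact cnv_down _ _ _ (binW_nonneg m J ν p hν j) (NB_nonneg m J ν p y hν hy j)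
      (NB_le_binW m J ν p y hν hy j)



lemma hat_max (u : ℝ) :
    max (1 - |u| / 2) 0 =
      2⁻¹ * max (1 - |u + 1|) 0 + max (1 - |u|) 0 + 2⁻¹ * max (1 - |u - 1|) 0 := by
  rcases le_total u (-2) with h | h
  · rw [abs_of_nonpos (by linarith), abs_of_nonpos (by linarith), abs_of_nonpos (by linarith),
      max_eq_right (by linarith), max_eq_right (by linarith), max_eq_right (by linarith),
      max_eq_right (by linarith)]
    ring
  rcases le_total u (-1) with h2 | h2
  · rw [abs_of_nonpos (by linarith), abs_of_nonpos (by linarith), abs_of_nonpos (by linarith),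
      max_eq_left (by linarith), max_eq_left (by linarith), max_eq_right (by linarith),
      max_eq_right (by linarith)]
    ring
  rcases le_total u 0 with h3 | h3
  · rw [abs_of_nonpos (by linarith), abs_of_nonneg (by linarith : (0:ℝ) ≤ u + 1),
      abs_of_nonpos (by linarith), max_eq_left (by linarith), max_eq_left (by linarith),
      max_eq_left (by linarith), max_eq_right (by linarith)]
    ring
  rcases le_total u 1 with h4 | h4
  · rw [abs_of_nonneg (by linarith : (0:ℝ) ≤ u), abs_of_nonneg (by linarith : (0:ℝ) ≤ u + 1),
      abs_of_nonpos (by linarith : u - 1 ≤ 0), max_eq_left (by linarith),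
      max_eq_right (by linarith), max_eq_left (by linarith), max_eq_left (by linarith)]
    ring
  rcases le_total u 2 with h5 | h5
  · rw [abs_of_nonneg (by linarith : (0:ℝ) ≤ u), abs_of_nonneg (by linarith : (0:ℝ) ≤ u + 1),
      abs_of_nonneg (by linarith : (0:ℝ) ≤ u - 1), max_eq_left (by linarith),
      max_eq_right (by linarith), max_eq_right (by linarith), max_eq_left (by linarith)]
    ring
  · rw [abs_of_nonneg (by linarith : (0:ℝ) ≤ u), abs_of_nonneg (by linarith : (0:ℝ) ≤ u + 1),
      abs_of_nonneg (by linarith : (0:ℝ) ≤ u - 1), max_eq_right (by linarith),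
      max_eq_right (by linarith), max_eq_right (by linarith), max_eq_right (by linarith)]
    ring

lemma tri_decomp (m j : ℕ) (hj : 1 ≤ j) (x : ℝ) :
    tri m j x = 2⁻¹ * tri (2*m) (2*j-1) x + tri (2*m) (2*j) x + 2⁻¹ * tri (2*m) (2*j+1) x := by
  unfold tri
  have h1 : ((2*j-1 : ℕ) : ℝ) = 2*(j:ℝ) - 1 := by
    have : (1:ℕ) ≤ 2*j := by omega
    push_cast [Nat.cast_sub this]; ring
  have h2 : ((2*m : ℕ) : ℝ) = 2*(m:ℝ) := by push_cast; ring
  have h3 : ((2*j : ℕ) : ℝ) = 2*(j:ℝ) := by push_cast; ring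
  have h4 : ((2*j+1 : ℕ) : ℝ) = 2*(j:ℝ) + 1 := by push_cast; ring
  rw [h1, h2, h3, h4]
  have := hat_max (2*(m:ℝ)*x - 2*(j:ℝ))
  have habs : |(m:ℝ)*x - (j:ℝ)| = |2*(m:ℝ)*x - 2*(j:ℝ)| / 2 := by
    rw [show 2*(m:ℝ)*x - 2*(j:ℝ) = 2*((m:ℝ)*x - j) by ring, abs_mul]
    simp [abs_of_nonneg]
  rw [habs, this]
  ring_nf

lemma tri_decomp0 (m : ℕ) (x : ℝ) (hx : 0 ≤ x) :
    tri m 0 x = tri (2*m) 0 x + 2⁻¹ * tri (2*m) 1 x := by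
  unfold tri
  have h2 : ((2*m : ℕ) : ℝ) = 2*(m:ℝ) := by push_cast; ring
  rw [h2]
  have := hat_max (2*(m:ℝ)*x - 0)
  have habs : |(m:ℝ)*x - (0:ℕ)| = |2*(m:ℝ)*x - 0| / 2 := by
    rw [show 2*(m:ℝ)*x - 0 = 2*((m:ℝ)*x - (0:ℕ)) by push_cast; ring, abs_mul]
    simp [abs_of_nonneg]
  have hz : max (1 - |2*(m:ℝ)*x - 0 + 1|) 0 = 0 := by
    rw [max_eq_right]
    have : 0 ≤ 2*(m:ℝ)*x := by positivity
    rw [abs_of_nonneg (by linarith)]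
    linarith
  rw [habs, this, hz]
  push_cast
  ring_nf

lemma max2 (x y : ℝ) : max (x + 2⁻¹*y) 0 ≤ max x 0 + 2⁻¹ * max y 0 := by
  apply max_le
  · nlinarith [le_max_left x 0, le_max_left y 0]
  · positivity

lemma max3 (x y z : ℝ) :
    max (2⁻¹*x + y + 2⁻¹*z) 0 ≤ 2⁻¹ * max x 0 + max y 0 + 2⁻¹ * max z 0 := by
  apply max_le
  · nlinarith [le_max_left x 0, le_max_left y 0, le_max_left z 0]
  · positivity

lemma binW_decomp {α : Type*} (m : ℕ) (J : Finset α) (ν : α → ℝ) (p : α → ℝ)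
    (j : ℕ) (hj : 1 ≤ j) :
    binW m J ν p j = 2⁻¹ * binW (2*m) J ν p (2*j-1) + binW (2*m) J ν p (2*j)
      + 2⁻¹ * binW (2*m) J ν p (2*j+1) := by
  unfold binW
  rw [Finset.mul_sum, Finset.mul_sum, ← Finset.sum_add_distrib, ← Finset.sum_add_distrib]
  refine Finset.sum_congr rfl fun z _ => ?_
  rw [tri_decomp m j hj]
  ring

lemma NB_decomp {α : Type*} (m : ℕ) (J : Finset α) (ν : α → ℝ) (p y : α → ℝ)
    (j : ℕ) (hj : 1 ≤ j) :
    NB m J ν p y j = 2⁻¹ * NB (2*m) J ν p y (2*j-1) + NB (2*m) J ν p y (2*j)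
      + 2⁻¹ * NB (2*m) J ν p y (2*j+1) := by
  unfold NB
  rw [Finset.mul_sum, Finset.mul_sum, ← Finset.sum_add_distrib, ← Finset.sum_add_distrib]
  refine Finset.sum_congr rfl fun z _ => ?_
  rw [tri_decomp m j hj]
  ring

lemma binW_decomp0 {α : Type*} (m : ℕ) (J : Finset α) (ν : α → ℝ) (p : α → ℝ)
    (hp : ∀ z ∈ J, 0 ≤ p z) :
    binW m J ν p 0 = binW (2*m) J ν p 0 + 2⁻¹ * binW (2*m) J ν p 1 := by
  unfold binW
  rw [Finset.mul_sum, ← Finset.sum_add_distrib]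
  refine Finset.sum_congr rfl fun z hz => ?_
  rw [tri_decomp0 m (p z) (hp z hz)]
  ring

lemma NB_decomp0 {α : Type*} (m : ℕ) (J : Finset α) (ν : α → ℝ) (p y : α → ℝ)
    (hp : ∀ z ∈ J, 0 ≤ p z) :
    NB m J ν p y 0 = NB (2*m) J ν p y 0 + 2⁻¹ * NB (2*m) J ν p y 1 := by
  unfold NB
  rw [Finset.mul_sum, ← Finset.sum_add_distrib]
  refine Finset.sum_congr rfl fun z hz => ?_
  rw [tri_decomp0 m (p z) (hp z hz)]
  ring

lemma sum_hat_range (f : ℕ → ℝ) (i : ℕ) :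
    f 0 + 2⁻¹ * f 1 + ∑ j ∈ Finset.Icc 1 i, (2⁻¹ * f (2*j-1) + f (2*j) + 2⁻¹ * f (2*j+1))
      = ∑ j ∈ Finset.range (2*i+1), f j + 2⁻¹ * f (2*i+1) := by
  induction i with
  | zero => simp
  | succ n ih =>
    rw [Finset.sum_Icc_succ_top (by omega : 1 ≤ n+1),
      show 2*(n+1) = 2*n+2 from by omega, show 2*n+2-1 = 2*n+1 from by omega,
      show 2*n+2+1 = 2*n+1+1+1 from by omega, Finset.sum_range_succ, Finset.sum_range_succ,
      show 2*n+1+1 = 2*n+2 from by omega, show 2*n+2+1 = 2*n+3 from by omega]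
    linarith

lemma sum_hat_Icc (f : ℕ → ℝ) (a b : ℕ) (ha : 1 ≤ a) (hab : a ≤ b) :
    ∑ j ∈ Finset.Icc a b, (2⁻¹ * f (2*j-1) + f (2*j) + 2⁻¹ * f (2*j+1))
      = 2⁻¹ * f (2*a-1) + ∑ j ∈ Finset.Icc (2*a) (2*b), f j + 2⁻¹ * f (2*b+1) := by
  induction b, hab using Nat.le_induction with
  | base => simp
  | succ n hn ih =>
    rw [Finset.sum_Icc_succ_top (by omega : a ≤ n+1), ih,
      show 2*(n+1) = 2*n+1+1 from by omega, show 2*n+1+1-1 = 2*n+1 from by omega,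
      Finset.sum_Icc_succ_top (by omega : 2*a ≤ 2*n+1+1),
      Finset.sum_Icc_succ_top (by omega : 2*a ≤ 2*n+1)]
    ring

noncomputable def Fup {α : Type*} (m : ℕ) (J : Finset α) (ν : α → ℝ) (p y : α → ℝ)
    (c : ℝ) (j : ℕ) : ℝ := max (NB m J ν p y j - c * binW m J ν p j) 0

noncomputable def Gdn {α : Type*} (m : ℕ) (J : Finset α) (ν : α → ℝ) (p y : α → ℝ)
    (c : ℝ) (j : ℕ) : ℝ := max (c * binW m J ν p j - NB m J ν p y j) 0

lemma Fup_nonneg {α : Type*} (m : ℕ) (J : Finset α) (ν : α → ℝ) (p y : α → ℝ)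
    (c : ℝ) (j : ℕ) : 0 ≤ Fup m J ν p y c j := le_max_right _ _

lemma Gdn_nonneg {α : Type*} (m : ℕ) (J : Finset α) (ν : α → ℝ) (p y : α → ℝ)
    (c : ℝ) (j : ℕ) : 0 ≤ Gdn m J ν p y c j := le_max_right _ _

lemma Fup_hat {α : Type*} (m : ℕ) (J : Finset α) (ν : α → ℝ) (p y : α → ℝ)
    (c : ℝ) (j : ℕ) (hj : 1 ≤ j) :
    Fup m J ν p y c j ≤ 2⁻¹ * Fup (2*m) J ν p y c (2*j-1) + Fup (2*m) J ν p y c (2*j)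
      + 2⁻¹ * Fup (2*m) J ν p y c (2*j+1) := by
  unfold Fup
  rw [binW_decomp m J ν p j hj, NB_decomp m J ν p y j hj,
    show 2⁻¹ * NB (2*m) J ν p y (2*j-1) + NB (2*m) J ν p y (2*j)
        + 2⁻¹ * NB (2*m) J ν p y (2*j+1)
        - c * (2⁻¹ * binW (2*m) J ν p (2*j-1) + binW (2*m) J ν p (2*j)
          + 2⁻¹ * binW (2*m) J ν p (2*j+1))
      = 2⁻¹ * (NB (2*m) J ν p y (2*j-1) - c * binW (2*m) J ν p (2*j-1))
        + (NB (2*m) J ν p y (2*j) - c * binW (2*m) J ν p (2*j))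
        + 2⁻¹ * (NB (2*m) J ν p y (2*j+1) - c * binW (2*m) J ν p (2*j+1)) from by ring]
  exact max3 _ _ _

lemma Gdn_hat {α : Type*} (m : ℕ) (J : Finset α) (ν : α → ℝ) (p y : α → ℝ)
    (c : ℝ) (j : ℕ) (hj : 1 ≤ j) :
    Gdn m J ν p y c j ≤ 2⁻¹ * Gdn (2*m) J ν p y c (2*j-1) + Gdn (2*m) J ν p y c (2*j)
      + 2⁻¹ * Gdn (2*m) J ν p y c (2*j+1) := by
  unfold Gdn
  rw [binW_decomp m J ν p j hj, NB_decomp m J ν p y j hj,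
    show c * (2⁻¹ * binW (2*m) J ν p (2*j-1) + binW (2*m) J ν p (2*j)
          + 2⁻¹ * binW (2*m) J ν p (2*j+1))
        - (2⁻¹ * NB (2*m) J ν p y (2*j-1) + NB (2*m) J ν p y (2*j)
          + 2⁻¹ * NB (2*m) J ν p y (2*j+1))
      = 2⁻¹ * (c * binW (2*m) J ν p (2*j-1) - NB (2*m) J ν p y (2*j-1))
        + (c * binW (2*m) J ν p (2*j) - NB (2*m) J ν p y (2*j))
        + 2⁻¹ * (c * binW (2*m) J ν p (2*j+1) - NB (2*m) J ν p y (2*j+1)) from by ring]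
  exact max3 _ _ _

lemma Fup_hat0 {α : Type*} (m : ℕ) (J : Finset α) (ν : α → ℝ) (p y : α → ℝ)
    (hp : ∀ z ∈ J, 0 ≤ p z) (c : ℝ) :
    Fup m J ν p y c 0 ≤ Fup (2*m) J ν p y c 0 + 2⁻¹ * Fup (2*m) J ν p y c 1 := by
  unfold Fup
  rw [binW_decomp0 m J ν p hp, NB_decomp0 m J ν p y hp,
    show NB (2*m) J ν p y 0 + 2⁻¹ * NB (2*m) J ν p y 1
        - c * (binW (2*m) J ν p 0 + 2⁻¹ * binW (2*m) J ν p 1)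
      = (NB (2*m) J ν p y 0 - c * binW (2*m) J ν p 0)
        + 2⁻¹ * (NB (2*m) J ν p y 1 - c * binW (2*m) J ν p 1) from by ring]
  exact max2 _ _

lemma Fup_mono {α : Type*} (m : ℕ) (J : Finset α) (ν : α → ℝ) (p y : α → ℝ)
    (hν : ∀ z ∈ J, 0 ≤ ν z) {c c' : ℝ} (h : c ≤ c') (j : ℕ) :
    Fup m J ν p y c' j ≤ Fup m J ν p y c j := by
  apply max_le_max _ le_rfl
  have := binW_nonneg m J ν p hν j
  nlinarith

lemma Gdn_mono {α : Type*} (m : ℕ) (J : Finset α) (ν : α → ℝ) (p y : α → ℝ)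
    (hν : ∀ z ∈ J, 0 ≤ ν z) {c c' : ℝ} (h : c ≤ c') (j : ℕ) :
    Gdn m J ν p y c j ≤ Gdn m J ν p y c' j := by
  apply max_le_max _ le_rfl
  have := binW_nonneg m J ν p hν j
  nlinarith

lemma Gdn_top {α : Type*} (m : ℕ) (J : Finset α) (ν : α → ℝ) (p y : α → ℝ)
    (hp : ∀ z ∈ J, p z ≤ 1) (c : ℝ) : Gdn (2*m) J ν p y c (2*m+1) = 0 := by
  unfold Gdn
  rw [binW_top (2*m) J ν p hp, NB_top (2*m) J ν p y hp]
  simp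

lemma SCFDL_eq' {α : Type*} (m : ℕ) (J : Finset α) (ν : α → ℝ) (p y : α → ℝ)
    (hν : ∀ z ∈ J, 0 ≤ ν z) (hy : ∀ z ∈ J, y z = 0 ∨ y z = 1) (i : ℕ) :
    SCFDL m J ν p y i
      = ∑ j ∈ Finset.range (i + 1), Fup m J ν p y (((i : ℝ) + 1) / m) j
        + ∑ j ∈ Finset.Icc (i + 1) m, Gdn m J ν p y ((i : ℝ) / m) j :=
  SCFDL_eq m J ν p y hν hy i


/-- for a finitely supported probability distribution `D` on
`[0,1] × {0,1}` and every positive integer `m`, `SCDL_{2m}(D) ≥ SCDL_m(D)`. -/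
theorem SCDLm_le_SCDLm_two_mul (m : ℕ) (hm : 0 < m)
    (S : Finset (ℝ × ℝ)) (μ : ℝ × ℝ → ℝ)
    (hμ : ∀ z ∈ S, 0 ≤ μ z) (hsum : ∑ z ∈ S, μ z = 1)
    (hsupp : ∀ z ∈ S, z.1 ∈ Set.Icc (0:ℝ) 1 ∧ (z.2 = 0 ∨ z.2 = 1)) :
    SCDLm m S μ Prod.fst Prod.snd ≤ SCDLm (2 * m) S μ Prod.fst Prod.snd := by
  have hp0 : ∀ z ∈ S, 0 ≤ Prod.fst z := fun z hz => (hsupp z hz).1.1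
  have hp1 : ∀ z ∈ S, Prod.fst z ≤ 1 := fun z hz => (hsupp z hz).1.2
  have hy : ∀ z ∈ S, Prod.snd z = 0 ∨ Prod.snd z = 1 := fun z hz => (hsupp z hz).2
  have hm' : (0:ℝ) < (m:ℝ) := by exact_mod_cast hm
  have hWnn := binW_nonneg (2*m) S μ Prod.fst hμ
  have hsplit : ∀ g : ℕ → ℝ, ∀ i : ℕ,
      ∑ j ∈ Finset.range (i+1), g j = g 0 + ∑ j ∈ Finset.Icc 1 i, g j := by
    intro g i
    rw [Finset.range_eq_Ico, Finset.Ico_add_one_right_eq_Icc,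
      Finset.Icc_eq_cons_Ioc (Nat.zero_le i), Finset.sum_cons, ← Finset.Icc_add_one_left_eq_Ioc, zero_add]
  unfold SCDLm
  apply Finset.sup'_le
  intro i hi
  rw [Finset.mem_range] at hi
  have hi' : i ≤ m := by omega
  -- nonnegativity of the target sup via index 0
  have hnn0 : (0:ℝ) ≤ SCFDL (2*m) S μ Prod.fst Prod.snd 0 := by
    rw [SCFDL_eq' (2*m) S μ Prod.fst Prod.snd hμ hy 0]
    have h1 : (0:ℝ) ≤ ∑ j ∈ Finset.range (0+1), Fup (2*m) S μ Prod.fst Prod.snd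
        (((0:ℕ) + 1) / (2*m:ℕ)) j :=
      Finset.sum_nonneg fun j _ => Fup_nonneg _ _ _ _ _ _ _
    have h2 : (0:ℝ) ≤ ∑ j ∈ Finset.Icc (0+1) (2*m), Gdn (2*m) S μ Prod.fst Prod.snd
        (((0:ℕ):ℝ) / (2*m:ℕ)) j :=
      Finset.sum_nonneg fun j _ => Gdn_nonneg _ _ _ _ _ _ _
    linarith
  rcases eq_or_lt_of_le hi' with heq | him
  · -- i = m : SCFDL m m = 0
    subst heq
    have hz : SCFDL i S μ Prod.fst Prod.snd i = 0 := by
      rw [SCFDL_eq' i S μ Prod.fst Prod.snd hμ hy i, Finset.Icc_eq_empty (by omega),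
        Finset.sum_empty, add_zero]
      apply Finset.sum_eq_zero
      intro j _
      unfold Fup
      rw [max_eq_right]
      have hN := NB_le_binW i S μ Prod.fst Prod.snd hμ hy j
      have hW := binW_nonneg i S μ Prod.fst hμ j
      have hc : (1:ℝ) ≤ ((i:ℝ) + 1) / i := by
        rw [le_div_iff₀ hm']; linarith
      nlinarith
    rw [hz]
    calc (0:ℝ) ≤ SCFDL (2*i) S μ Prod.fst Prod.snd 0 := hnn0
      _ ≤ _ := Finset.le_sup' _ (Finset.mem_range.mpr (by omega))
  -- main case i < m
  have hmem1 : 2*i ∈ Finset.range (2*m+1) := Finset.mem_range.mpr (by omega)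
  have hmem2 : 2*i+1 ∈ Finset.range (2*m+1) := Finset.mem_range.mpr (by omega)
  have hle1 : SCFDL (2*m) S μ Prod.fst Prod.snd (2*i)
      ≤ (Finset.range (2*m+1)).sup'
        (Finset.nonempty_range_iff.mpr (Nat.succ_ne_zero (2*m)))
        (SCFDL (2*m) S μ Prod.fst Prod.snd) := Finset.le_sup' _ hmem1
  have hle2 : SCFDL (2*m) S μ Prod.fst Prod.snd (2*i+1)
      ≤ (Finset.range (2*m+1)).sup'
        (Finset.nonempty_range_iff.mpr (Nat.succ_ne_zero (2*m)))
        (SCFDL (2*m) S μ Prod.fst Prod.snd) := Finset.le_sup' _ hmem2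
  -- constants
  have hA : ((2*i:ℕ):ℝ)/((2*m:ℕ):ℝ) = (i:ℝ)/m := by
    push_cast
    rw [mul_div_mul_left _ _ (two_ne_zero)]
  have hB : (((2*i:ℕ):ℝ)+1)/((2*m:ℕ):ℝ) = (2*(i:ℝ)+1)/(2*(m:ℝ)) := by push_cast; ring
  have hC : (((2*i+1:ℕ):ℝ)+1)/((2*m:ℕ):ℝ) = ((i:ℝ)+1)/m := by
    push_cast
    rw [show (2*(i:ℝ)+1+1) = 2*((i:ℝ)+1) from by ring,
      mul_div_mul_left _ _ (two_ne_zero)]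
  have hD : ((2*i+1:ℕ):ℝ)/((2*m:ℕ):ℝ) = (2*(i:ℝ)+1)/(2*(m:ℝ)) := by push_cast; ring
  have hc0h : (i:ℝ)/m ≤ (2*(i:ℝ)+1)/(2*(m:ℝ)) := by
    rw [div_le_div_iff₀ hm' (by positivity)]
    nlinarith [Nat.cast_nonneg (α := ℝ) i]
  have hhc1 : (2*(i:ℝ)+1)/(2*(m:ℝ)) ≤ ((i:ℝ)+1)/m := by
    rw [div_le_div_iff₀ (by positivity) hm']
    nlinarith
  -- step 1 : first sum bound
  have P1 : ∑ j ∈ Finset.range (i+1), Fup m S μ Prod.fst Prod.snd (((i:ℝ)+1)/m) j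
      ≤ ∑ j ∈ Finset.range (2*i+1), Fup (2*m) S μ Prod.fst Prod.snd (((i:ℝ)+1)/m) j
        + 2⁻¹ * Fup (2*m) S μ Prod.fst Prod.snd (((i:ℝ)+1)/m) (2*i+1) := by
    rw [← sum_hat_range (Fup (2*m) S μ Prod.fst Prod.snd (((i:ℝ)+1)/m)) i,
      hsplit (Fup m S μ Prod.fst Prod.snd (((i:ℝ)+1)/m)) i]
    exact add_le_add (Fup_hat0 m S μ Prod.fst Prod.snd hp0 _)
      (Finset.sum_le_sum fun j hj =>
        Fup_hat m S μ Prod.fst Prod.snd _ j (Finset.mem_Icc.mp hj).1)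
  -- step 2 : second sum bound
  have P2 : ∑ j ∈ Finset.Icc (i+1) m, Gdn m S μ Prod.fst Prod.snd ((i:ℝ)/m) j
      ≤ 2⁻¹ * Gdn (2*m) S μ Prod.fst Prod.snd ((i:ℝ)/m) (2*i+1)
        + ∑ j ∈ Finset.Icc (2*i+2) (2*m), Gdn (2*m) S μ Prod.fst Prod.snd ((i:ℝ)/m) j := by
    calc ∑ j ∈ Finset.Icc (i+1) m, Gdn m S μ Prod.fst Prod.snd ((i:ℝ)/m) j
        ≤ ∑ j ∈ Finset.Icc (i+1) m,
            (2⁻¹ * Gdn (2*m) S μ Prod.fst Prod.snd ((i:ℝ)/m) (2*j-1)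
              + Gdn (2*m) S μ Prod.fst Prod.snd ((i:ℝ)/m) (2*j)
              + 2⁻¹ * Gdn (2*m) S μ Prod.fst Prod.snd ((i:ℝ)/m) (2*j+1)) :=
          Finset.sum_le_sum fun j hj =>
            Gdn_hat m S μ Prod.fst Prod.snd _ j (by have := (Finset.mem_Icc.mp hj).1; omega)
      _ = 2⁻¹ * Gdn (2*m) S μ Prod.fst Prod.snd ((i:ℝ)/m) (2*(i+1)-1)
            + ∑ j ∈ Finset.Icc (2*(i+1)) (2*m), Gdn (2*m) S μ Prod.fst Prod.snd ((i:ℝ)/m) j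
            + 2⁻¹ * Gdn (2*m) S μ Prod.fst Prod.snd ((i:ℝ)/m) (2*m+1) :=
          sum_hat_Icc _ (i+1) m (by omega) him
      _ = 2⁻¹ * Gdn (2*m) S μ Prod.fst Prod.snd ((i:ℝ)/m) (2*i+1)
            + ∑ j ∈ Finset.Icc (2*i+2) (2*m), Gdn (2*m) S μ Prod.fst Prod.snd ((i:ℝ)/m) j := by
          rw [show 2*(i+1)-1 = 2*i+1 from by omega, show 2*(i+1) = 2*i+2 from by omega,
            Gdn_top m S μ Prod.fst Prod.snd hp1 _]
          ring
  -- decompositions of the two target SCFDL values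
  have hR1 : SCFDL (2*m) S μ Prod.fst Prod.snd (2*i)
      = ∑ j ∈ Finset.range (2*i+1), Fup (2*m) S μ Prod.fst Prod.snd ((2*(i:ℝ)+1)/(2*(m:ℝ))) j
        + (Gdn (2*m) S μ Prod.fst Prod.snd ((i:ℝ)/m) (2*i+1)
          + ∑ j ∈ Finset.Icc (2*i+2) (2*m), Gdn (2*m) S μ Prod.fst Prod.snd ((i:ℝ)/m) j) := by
    rw [SCFDL_eq' (2*m) S μ Prod.fst Prod.snd hμ hy (2*i), hA, hB]
    congr 1
    rw [Finset.Icc_eq_cons_Ioc (by omega : 2*i+1 ≤ 2*m), Finset.sum_cons, ← Finset.Icc_add_one_left_eq_Ioc,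
      show 2*i+1+1 = 2*i+2 from rfl]
  have hR2 : SCFDL (2*m) S μ Prod.fst Prod.snd (2*i+1)
      = (∑ j ∈ Finset.range (2*i+1), Fup (2*m) S μ Prod.fst Prod.snd (((i:ℝ)+1)/m) j
          + Fup (2*m) S μ Prod.fst Prod.snd (((i:ℝ)+1)/m) (2*i+1))
        + ∑ j ∈ Finset.Icc (2*i+2) (2*m),
            Gdn (2*m) S μ Prod.fst Prod.snd ((2*(i:ℝ)+1)/(2*(m:ℝ))) j := by
    rw [SCFDL_eq' (2*m) S μ Prod.fst Prod.snd hμ hy (2*i+1), hC, hD,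
      Finset.sum_range_succ, show 2*i+1+1 = 2*i+2 from rfl]
  -- monotonicity in the constants
  have hM1 : ∑ j ∈ Finset.range (2*i+1), Fup (2*m) S μ Prod.fst Prod.snd (((i:ℝ)+1)/m) j
      ≤ ∑ j ∈ Finset.range (2*i+1),
          Fup (2*m) S μ Prod.fst Prod.snd ((2*(i:ℝ)+1)/(2*(m:ℝ))) j :=
    Finset.sum_le_sum fun j _ => Fup_mono (2*m) S μ Prod.fst Prod.snd hμ hhc1 j
  have hM2 : ∑ j ∈ Finset.Icc (2*i+2) (2*m), Gdn (2*m) S μ Prod.fst Prod.snd ((i:ℝ)/m) j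
      ≤ ∑ j ∈ Finset.Icc (2*i+2) (2*m),
          Gdn (2*m) S μ Prod.fst Prod.snd ((2*(i:ℝ)+1)/(2*(m:ℝ))) j :=
    Finset.sum_le_sum fun j _ => Gdn_mono (2*m) S μ Prod.fst Prod.snd hμ hc0h j
  rw [SCFDL_eq' m S μ Prod.fst Prod.snd hμ hy i]
  linarith
end

section
/- Let J be a joint distribution of (p1, p2, y) in [0,1] × [0,1] × {0,1}, with marginal distributions D1 of (p1, y) and D2 of (p2, y). Then for every positive integer m, |SCDL_m(D1) - SCDL_m(D2)| ≤ C·m·E_J[|p1 - p2|] for an absolute constant C. -/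
open Finset

lemma tri_lip (m i : ℕ) (a b : ℝ) : |tri m i a - tri m i b| ≤ m * |a - b| := by
  have h1 : |tri m i a - tri m i b| ≤ |(1 - |(m:ℝ)*a - i|) - (1 - |(m:ℝ)*b - i|)| :=
    abs_max_sub_max_le_abs _ _ _
  refine h1.trans ?_
  have h2 : (1 - |(m:ℝ)*a - i|) - (1 - |(m:ℝ)*b - i|) = |(m:ℝ)*b - i| - |(m:ℝ)*a - i| := by ring
  rw [h2]
  refine (abs_abs_sub_abs_le_abs_sub _ _).trans ?_
  rw [show ((m:ℝ)*b - i) - ((m:ℝ)*a - i) = (m:ℝ) * (b - a) by ring, abs_mul,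
    Nat.abs_cast, abs_sub_comm]

lemma tri_eq_zero {m i : ℕ} {x : ℝ} (h : (1:ℝ) ≤ |(m:ℝ)*x - i|) : tri m i x = 0 :=
  max_eq_right (by linarith)

lemma floor_cases (m j : ℕ) (x : ℝ) (hx : 0 ≤ x) (h : |(m:ℝ)*x - j| < 1) :
    j = ⌊(m:ℝ)*x⌋₊ ∨ j = ⌊(m:ℝ)*x⌋₊ + 1 := by
  set t := (m:ℝ)*x with ht
  have ht0 : 0 ≤ t := by positivity
  rw [abs_lt] at h
  have h1 : (j:ℝ) < t + 1 := by linarith [h.2]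
  have h2 : t < (j:ℝ) + 1 := by linarith [h.1]
  have f1 : ⌊t⌋₊ ≤ j := by
    have hfl : (⌊t⌋₊:ℝ) ≤ t := Nat.floor_le ht0
    have : (⌊t⌋₊:ℝ) < (j:ℝ) + 1 := lt_of_le_of_lt hfl h2
    have : ⌊t⌋₊ < j + 1 := by exact_mod_cast this
    omega
  have f2 : j ≤ ⌊t⌋₊ + 1 := by
    have hfl : t < (⌊t⌋₊:ℝ) + 1 := Nat.lt_floor_add_one t
    have : (j:ℝ) < (⌊t⌋₊:ℝ) + 2 := by linarith
    have : j < ⌊t⌋₊ + 2 := by exact_mod_cast this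
    omega
  omega

lemma sum_tri_diff (m : ℕ) (a b : ℝ) (ha : 0 ≤ a) (hb : 0 ≤ b) :
    ∑ j ∈ Finset.range (m+1), |tri m j a - tri m j b| ≤ 4 * m * |a - b| := by
  set T : Finset ℕ := {⌊(m:ℝ)*a⌋₊, ⌊(m:ℝ)*a⌋₊+1, ⌊(m:ℝ)*b⌋₊, ⌊(m:ℝ)*b⌋₊+1} with hT
  have hsub : (Finset.range (m+1)).filter (fun j => tri m j a ≠ tri m j b) ⊆ T := by
    intro j hj
    rw [Finset.mem_filter] at hj
    have hne := hj.2
    have hcase : |(m:ℝ)*a - j| < 1 ∨ |(m:ℝ)*b - j| < 1 := by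
      by_contra hcon
      push_neg at hcon
      exact hne (by rw [tri_eq_zero hcon.1, tri_eq_zero hcon.2])
    simp only [hT, Finset.mem_insert, Finset.mem_singleton]
    rcases hcase with h | h
    · rcases floor_cases m j a ha h with h' | h' <;> tauto
    · rcases floor_cases m j b hb h with h' | h' <;> tauto
  have step1 : ∑ j ∈ (Finset.range (m+1)).filter (fun j => tri m j a ≠ tri m j b),
          |tri m j a - tri m j b|
      = ∑ j ∈ Finset.range (m+1), |tri m j a - tri m j b| := by
    apply Finset.sum_filter_of_ne
    intro j _ h heq
    exact h (by rw [heq, sub_self, abs_zero])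
  rw [← step1]
  have step2 : ∑ j ∈ (Finset.range (m+1)).filter (fun j => tri m j a ≠ tri m j b),
      |tri m j a - tri m j b| ≤ ∑ j ∈ T, |tri m j a - tri m j b| :=
    Finset.sum_le_sum_of_subset_of_nonneg hsub (fun j _ _ => abs_nonneg _)
  refine step2.trans ?_
  have step3 : ∑ j ∈ T, |tri m j a - tri m j b| ≤ ∑ _j ∈ T, (m:ℝ) * |a - b| :=
    Finset.sum_le_sum (fun j _ => tri_lip m j a b)
  refine step3.trans ?_
  rw [Finset.sum_const, nsmul_eq_mul]
  have hcard : (T.card : ℝ) ≤ 4 := by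
    have : T.card ≤ 4 := by
      refine (Finset.card_insert_le _ _).trans ?_
      refine Nat.succ_le_succ ?_
      refine (Finset.card_insert_le _ _).trans ?_
      refine Nat.succ_le_succ ?_
      exact Finset.card_insert_le _ _
    exact_mod_cast this
  have h0 : (0:ℝ) ≤ (m:ℝ) * |a - b| := by positivity
  nlinarith

lemma mul_max_sub (A B c : ℝ) (hA : 0 ≤ A) (hAB : A ≤ B) :
    B * max (A / B - c) 0 = max (A - c * B) 0 := by
  rcases eq_or_lt_of_le (hA.trans hAB) with h | h
  · have hB : B = 0 := h.symm
    have hA0 : A = 0 := le_antisymm (hB ▸ hAB) hA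
    simp [hB, hA0]
  · rw [mul_max_of_nonneg _ _ h.le, mul_zero, mul_sub, mul_div_cancel₀ _ h.ne',
      mul_comm B c]

lemma mul_max_sub' (A B c : ℝ) (hA : 0 ≤ A) (hAB : A ≤ B) :
    B * max (c - A / B) 0 = max (c * B - A) 0 := by
  rcases eq_or_lt_of_le (hA.trans hAB) with h | h
  · have hB : B = 0 := h.symm
    have hA0 : A = 0 := le_antisymm (hB ▸ hAB) hA
    simp [hB, hA0]
  · rw [mul_max_of_nonneg _ _ h.le, mul_zero, mul_sub, mul_div_cancel₀ _ h.ne',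
      mul_comm B c]

/-- Lipschitz continuity of `SCDL_m` in the predictions. For a joint
(coupling) distribution `J` of `(p₁, p₂, y)` with marginals `D₁` of `(p₁, y)` and
`D₂` of `(p₂, y)`, `|SCDL_m(D₁) - SCDL_m(D₂)| ≤ C·m·E_J[|p₁ - p₂|]` for an absolute
constant `C`. -/
theorem SCDLm_lipschitz :
    ∃ C : ℝ, 0 < C ∧
      ∀ (α : Type) (J : Finset α) (ν : α → ℝ) (p₁ p₂ y : α → ℝ),
        (∀ z ∈ J, 0 ≤ ν z) → (∑ z ∈ J, ν z = 1) →
        (∀ z ∈ J, p₁ z ∈ Set.Icc (0:ℝ) 1 ∧ p₂ z ∈ Set.Icc (0:ℝ) 1 ∧ (y z = 0 ∨ y z = 1)) →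
        ∀ m : ℕ, 0 < m →
          |SCDLm m J ν p₁ y - SCDLm m J ν p₂ y| ≤ C * m * ∑ z ∈ J, ν z * |p₁ z - p₂ z| := by
  refine ⟨12, by norm_num, ?_⟩
  intro α J ν p₁ p₂ y hν hν1 hbd m hm
  set E := ∑ z ∈ J, ν z * |p₁ z - p₂ z| with hE
  have hmR : (0:ℝ) < m := by exact_mod_cast hm
  -- basic facts about y
  have hy0 : ∀ z ∈ J, 0 ≤ y z := by
    intro z hz; rcases (hbd z hz).2.2 with h | h <;> rw [h] <;> norm_num
  have hy1 : ∀ z ∈ J, y z ≤ 1 := by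
    intro z hz; rcases (hbd z hz).2.2 with h | h <;> rw [h] <;> norm_num
  -- numerator/denominator facts
  have hA : ∀ (p : α → ℝ) (j : ℕ), 0 ≤ ∑ z ∈ J, ν z * tri m j (p z) * y z := by
    intro p j
    refine Finset.sum_nonneg fun z hz => ?_
    exact mul_nonneg (mul_nonneg (hν z hz) (tri_nonneg m j (p z))) (hy0 z hz)
  have hAB : ∀ (p : α → ℝ) (j : ℕ),
      (∑ z ∈ J, ν z * tri m j (p z) * y z) ≤ binW m J ν p j := by
    intro p j
    refine Finset.sum_le_sum fun z hz => ?_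
    exact mul_le_of_le_one_right (mul_nonneg (hν z hz) (tri_nonneg m j (p z))) (hy1 z hz)
  -- rewrite SCFDL
  have hSCFDL : ∀ (p : α → ℝ) (i : ℕ), SCFDL m J ν p y i =
      (∑ j ∈ Finset.range (i + 1),
        max ((∑ z ∈ J, ν z * tri m j (p z) * y z) - ((i:ℝ)+1)/m * binW m J ν p j) 0)
      + ∑ j ∈ Finset.Icc (i + 1) m,
        max ((i:ℝ)/m * binW m J ν p j - ∑ z ∈ J, ν z * tri m j (p z) * y z) 0 := by
    intro p i
    unfold SCFDL binQ
    congr 1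
    · exact Finset.sum_congr rfl fun j _ => mul_max_sub _ _ _ (hA p j) (hAB p j)
    · exact Finset.sum_congr rfl fun j _ => mul_max_sub' _ _ _ (hA p j) (hAB p j)
  -- the per-bin difference quantity
  set D : ℕ → ℝ := fun j =>
    |(∑ z ∈ J, ν z * tri m j (p₁ z) * y z) - ∑ z ∈ J, ν z * tri m j (p₂ z) * y z|
    + 2 * |binW m J ν p₁ j - binW m J ν p₂ j| with hD
  have hDnn : ∀ j, 0 ≤ D j := fun j => by
    have := abs_nonneg ((∑ z ∈ J, ν z * tri m j (p₁ z) * y z) - ∑ z ∈ J, ν z * tri m j (p₂ z) * y z)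
    have := abs_nonneg (binW m J ν p₁ j - binW m J ν p₂ j)
    simp only [hD]; linarith
  -- total bound on ∑ D
  have hDtot : ∑ j ∈ Finset.range (m+1), D j ≤ 12 * m * E := by
    have hper : ∀ j, D j ≤ 3 * ∑ z ∈ J, ν z * |tri m j (p₁ z) - tri m j (p₂ z)| := by
      intro j
      have h1 : |(∑ z ∈ J, ν z * tri m j (p₁ z) * y z) - ∑ z ∈ J, ν z * tri m j (p₂ z) * y z|
          ≤ ∑ z ∈ J, ν z * |tri m j (p₁ z) - tri m j (p₂ z)| := by
        rw [← Finset.sum_sub_distrib]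
        refine (Finset.abs_sum_le_sum_abs _ _).trans (Finset.sum_le_sum fun z hz => ?_)
        have : ν z * tri m j (p₁ z) * y z - ν z * tri m j (p₂ z) * y z
            = ν z * (tri m j (p₁ z) - tri m j (p₂ z)) * y z := by ring
        rw [this, abs_mul, abs_mul, abs_of_nonneg (hν z hz)]
        calc ν z * |tri m j (p₁ z) - tri m j (p₂ z)| * |y z|
            ≤ ν z * |tri m j (p₁ z) - tri m j (p₂ z)| * 1 := by
              refine mul_le_mul_of_nonneg_left ?_ (mul_nonneg (hν z hz) (abs_nonneg _))
              rw [abs_le]; exact ⟨by linarith [hy0 z hz], hy1 z hz⟩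
          _ = ν z * |tri m j (p₁ z) - tri m j (p₂ z)| := by ring
      have h2 : |binW m J ν p₁ j - binW m J ν p₂ j|
          ≤ ∑ z ∈ J, ν z * |tri m j (p₁ z) - tri m j (p₂ z)| := by
        unfold binW
        rw [← Finset.sum_sub_distrib]
        refine (Finset.abs_sum_le_sum_abs _ _).trans (Finset.sum_le_sum fun z hz => ?_)
        rw [← mul_sub, abs_mul, abs_of_nonneg (hν z hz)]
      simp only [hD]; linarith
    calc ∑ j ∈ Finset.range (m+1), D j
        ≤ ∑ j ∈ Finset.range (m+1), 3 * ∑ z ∈ J, ν z * |tri m j (p₁ z) - tri m j (p₂ z)| :=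
          Finset.sum_le_sum fun j _ => hper j
      _ = 3 * ∑ z ∈ J, ν z * ∑ j ∈ Finset.range (m+1), |tri m j (p₁ z) - tri m j (p₂ z)| := by
          rw [← Finset.mul_sum, Finset.sum_comm]
          congr 1
          exact Finset.sum_congr rfl fun z _ => by rw [Finset.mul_sum]
      _ ≤ 3 * ∑ z ∈ J, ν z * (4 * m * |p₁ z - p₂ z|) := by
          refine mul_le_mul_of_nonneg_left (Finset.sum_le_sum fun z hz => ?_) (by norm_num)
          exact mul_le_mul_of_nonneg_left
            (sum_tri_diff m (p₁ z) (p₂ z) ((hbd z hz).1.1) ((hbd z hz).2.1.1)) (hν z hz)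
      _ = 12 * m * E := by
          rw [hE, Finset.mul_sum, Finset.mul_sum]
          exact Finset.sum_congr rfl fun z _ => by ring
  -- per-index bound
  have key : ∀ i ∈ Finset.range (m+1),
      |SCFDL m J ν p₁ y i - SCFDL m J ν p₂ y i| ≤ 12 * m * E := by
    intro i hi
    have him : i ≤ m := Nat.lt_succ_iff.mp (Finset.mem_range.mp hi)
    have hc2 : ((i:ℝ)+1)/m ≤ 2 := by
      rw [div_le_iff₀ hmR]
      have : (i:ℝ) ≤ m := by exact_mod_cast him
      have : (1:ℝ) ≤ m := by exact_mod_cast hm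
      linarith
    have hc0 : 0 ≤ ((i:ℝ)+1)/m := by positivity
    have hc2' : (i:ℝ)/m ≤ 2 := by
      rw [div_le_iff₀ hmR]
      have : (i:ℝ) ≤ m := by exact_mod_cast him
      have : (1:ℝ) ≤ m := by exact_mod_cast hm
      linarith
    have hc0' : 0 ≤ (i:ℝ)/m := by positivity
    rw [hSCFDL p₁ i, hSCFDL p₂ i]
    -- bound each of the two sum differences
    have hb1 : |(∑ j ∈ Finset.range (i + 1),
          max ((∑ z ∈ J, ν z * tri m j (p₁ z) * y z) - ((i:ℝ)+1)/m * binW m J ν p₁ j) 0)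
        - ∑ j ∈ Finset.range (i + 1),
          max ((∑ z ∈ J, ν z * tri m j (p₂ z) * y z) - ((i:ℝ)+1)/m * binW m J ν p₂ j) 0|
        ≤ ∑ j ∈ Finset.range (i + 1), D j := by
      rw [← Finset.sum_sub_distrib]
      refine (Finset.abs_sum_le_sum_abs _ _).trans (Finset.sum_le_sum fun j _ => ?_)
      refine (abs_max_sub_max_le_abs _ _ 0).trans ?_
      have heq : ((∑ z ∈ J, ν z * tri m j (p₁ z) * y z) - ((i:ℝ)+1)/m * binW m J ν p₁ j)
          - ((∑ z ∈ J, ν z * tri m j (p₂ z) * y z) - ((i:ℝ)+1)/m * binW m J ν p₂ j)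
          = ((∑ z ∈ J, ν z * tri m j (p₁ z) * y z) - ∑ z ∈ J, ν z * tri m j (p₂ z) * y z)
            - ((i:ℝ)+1)/m * (binW m J ν p₁ j - binW m J ν p₂ j) := by ring
      rw [heq]
      refine (abs_sub _ _).trans ?_
      have h3 : |((i:ℝ)+1)/m * (binW m J ν p₁ j - binW m J ν p₂ j)|
          ≤ 2 * |binW m J ν p₁ j - binW m J ν p₂ j| := by
        rw [abs_mul, abs_of_nonneg hc0]
        exact mul_le_mul_of_nonneg_right hc2 (abs_nonneg _)
      simp only [hD]; linarith
    have hb2 : |(∑ j ∈ Finset.Icc (i + 1) m,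
          max ((i:ℝ)/m * binW m J ν p₁ j - ∑ z ∈ J, ν z * tri m j (p₁ z) * y z) 0)
        - ∑ j ∈ Finset.Icc (i + 1) m,
          max ((i:ℝ)/m * binW m J ν p₂ j - ∑ z ∈ J, ν z * tri m j (p₂ z) * y z) 0|
        ≤ ∑ j ∈ Finset.Icc (i + 1) m, D j := by
      rw [← Finset.sum_sub_distrib]
      refine (Finset.abs_sum_le_sum_abs _ _).trans (Finset.sum_le_sum fun j _ => ?_)
      refine (abs_max_sub_max_le_abs _ _ 0).trans ?_
      have heq : ((i:ℝ)/m * binW m J ν p₁ j - ∑ z ∈ J, ν z * tri m j (p₁ z) * y z)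
          - ((i:ℝ)/m * binW m J ν p₂ j - ∑ z ∈ J, ν z * tri m j (p₂ z) * y z)
          = ((i:ℝ)/m * (binW m J ν p₁ j - binW m J ν p₂ j))
            - ((∑ z ∈ J, ν z * tri m j (p₁ z) * y z) - ∑ z ∈ J, ν z * tri m j (p₂ z) * y z) := by
        ring
      rw [heq]
      refine (abs_sub _ _).trans ?_
      have h3 : |(i:ℝ)/m * (binW m J ν p₁ j - binW m J ν p₂ j)|
          ≤ 2 * |binW m J ν p₁ j - binW m J ν p₂ j| := by
        rw [abs_mul, abs_of_nonneg hc0']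
        exact mul_le_mul_of_nonneg_right hc2' (abs_nonneg _)
      simp only [hD]; linarith
    have hsplit : (∑ j ∈ Finset.range (i + 1), D j) + ∑ j ∈ Finset.Icc (i + 1) m, D j
        = ∑ j ∈ Finset.range (m+1), D j := by
      rw [Finset.range_eq_Ico, ← Finset.Ico_add_one_right_eq_Icc]
      exact (Finset.sum_Ico_consecutive D (Nat.zero_le (i + 1)) (by omega : i + 1 ≤ m + 1)).trans
        (by rw [Finset.range_eq_Ico])
    have habs : ∀ a b c d X Y : ℝ, |a - c| ≤ X → |b - d| ≤ Y → |(a + b) - (c + d)| ≤ X + Y := by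
      intro a b c d X Y h1 h2
      have h : (a + b) - (c + d) = (a - c) + (b - d) := by ring
      rw [h]
      exact (abs_add_le _ _).trans (by linarith)
    have hfin := habs _ _ _ _ _ _ hb1 hb2
    rw [hsplit] at hfin
    exact hfin.trans hDtot
  -- combine via sup'
  have hne := Finset.nonempty_range_iff.mpr (Nat.succ_ne_zero m)
  rw [abs_sub_le_iff]
  constructor
  · rw [sub_le_iff_le_add, SCDLm]
    refine Finset.sup'_le _ _ fun i hi => ?_
    have h1 := (abs_sub_le_iff.mp (key i hi)).1
    have h2 : SCFDL m J ν p₂ y i ≤ SCDLm m J ν p₂ y := Finset.le_sup' _ hi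
    unfold SCDLm at h2 ⊢
    linarith
  · rw [sub_le_iff_le_add, SCDLm]
    refine Finset.sup'_le _ _ fun i hi => ?_
    have h1 := (abs_sub_le_iff.mp (key i hi)).2
    have h2 : SCFDL m J ν p₁ y i ≤ SCDLm m J ν p₁ y := Finset.le_sup' _ hi
    unfold SCDLm at h2 ⊢
    linarith
end

section
/- Any calibration measure CAL_T that is (1) actionable — for every decision task Z with utility in [0,1] and every α ≥ 0 there is a randomized response function r_{Z,α} (independent of the distribution) such that CAL_T(D) ≤ α implies SR_Z(r_{Z,α}, D) ≤ α — and (2) ε(T)-testable for calibrated distributions — E[CAL_T(S_T)] ≤ ε(T) for the empirical distribution S_T of T i.i.d. samples from any calibrated D — must satisfy ε(T) ≥ c·T^{-1/2} for an absolute constant c > 0. -/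
open scoped Classical


def IsDist (D : (ℝ × ℝ) →₀ ℝ) : Prop :=
  (∀ z, 0 ≤ D z) ∧ (∑ z ∈ D.support, D z = 1) ∧
    ∀ z ∈ D.support, z.1 ∈ Set.Icc (0:ℝ) 1 ∧ (z.2 = 0 ∨ z.2 = 1)

def CalibratedD (D : (ℝ × ℝ) →₀ ℝ) : Prop :=
  ∀ v : ℝ, (∑ z ∈ D.support, if z.1 = v then D z * z.2 else 0)
      = v * ∑ z ∈ D.support, if z.1 = v then D z else 0

noncomputable def SRD (n : ℕ) (U : Fin n → ℝ → ℝ) (r : ℝ → Fin n → ℝ)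
    (D : (ℝ × ℝ) →₀ ℝ) : ℝ :=
  ⨆ σ : Fin n → Fin n,
    ∑ z ∈ D.support, D z * ∑ a : Fin n, r z.1 a * (U (σ a) z.2 - U a z.2)

noncomputable def empDist (T : ℕ) (f : Fin T → ℝ × ℝ) : (ℝ × ℝ) →₀ ℝ :=
  ∑ t : Fin T, Finsupp.single (f t) ((T : ℝ)⁻¹)

noncomputable def expectedCAL (T : ℕ) (CAL : ((ℝ × ℝ) →₀ ℝ) → ℝ)
    (D : (ℝ × ℝ) →₀ ℝ) : ℝ :=
  ∑ f : Fin T → {z : ℝ × ℝ // z ∈ D.support},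
    (∏ t : Fin T, D (f t)) * CAL (empDist T (fun t => (f t : ℝ × ℝ)))



lemma cb_sq_bound (n : ℕ) : (Nat.centralBinom n)^2 * (2*n+1) ≤ 16^n := by
  induction n with
  | zero => simp [Nat.centralBinom]
  | succ n ih =>
    have key := Nat.succ_mul_centralBinom_succ n
    have h0 : 0 < (n+1)^2 := by positivity
    have big : (n+1)^2 * ((Nat.centralBinom (n+1))^2 * (2*(n+1)+1))
        ≤ (n+1)^2 * 16^(n+1) := by
      have h1 : (n+1)^2 * ((Nat.centralBinom (n+1))^2 * (2*(n+1)+1))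
          = ((n+1) * Nat.centralBinom (n+1))^2 * (2*n+3) := by ring
      rw [h1, key]
      have h2 : (2*(2*n+1)*Nat.centralBinom n)^2 * (2*n+3)
          = (4*(2*n+1)*(2*n+3)) * ((Nat.centralBinom n)^2*(2*n+1)) := by ring
      rw [h2]
      calc (4*(2*n+1)*(2*n+3)) * ((Nat.centralBinom n)^2*(2*n+1))
          ≤ (16*(n+1)^2) * 16^n := by
            apply Nat.mul_le_mul _ ih
            nlinarith
        _ = (n+1)^2 * 16^(n+1) := by ring
    exact Nat.le_of_mul_le_mul_left big h0

lemma cb_real (n : ℕ) : (Nat.centralBinom n : ℝ) * Real.sqrt (2*n+1) ≤ 4^n := by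
  have h := cb_sq_bound n
  have h' : ((Nat.centralBinom n : ℝ))^2 * (2*n+1) ≤ 16^n := by exact_mod_cast h
  have hx : (0:ℝ) ≤ (Nat.centralBinom n : ℝ) * Real.sqrt (2*n+1) := by positivity
  have hsq : ((Nat.centralBinom n : ℝ) * Real.sqrt (2*n+1))^2 ≤ ((4:ℝ)^n)^2 := by
    rw [mul_pow, Real.sq_sqrt (by positivity)]
    calc ((Nat.centralBinom n : ℝ))^2 * (2*n+1) ≤ 16^n := h'
      _ = ((4:ℝ)^n)^2 := by
          rw [show (16:ℝ)=4^2 by norm_num, ← pow_mul, ← pow_mul, Nat.mul_comm]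
  calc (Nat.centralBinom n : ℝ) * Real.sqrt (2*n+1)
      = Real.sqrt (((Nat.centralBinom n : ℝ) * Real.sqrt (2*n+1))^2) := (Real.sqrt_sq hx).symm
    _ ≤ Real.sqrt (((4:ℝ)^n)^2) := Real.sqrt_le_sqrt hsq
    _ = 4^n := Real.sqrt_sq (by positivity)

lemma mid_le (T : ℕ) : (Nat.choose T (T/2) : ℝ) * Real.sqrt T ≤ 2^T := by
  rcases Nat.even_or_odd T with ⟨n, hn⟩ | ⟨n, hn⟩
  · have hT : T = 2*n := by omega
    subst hT
    have hc : Nat.choose (2*n) ((2*n)/2) = Nat.centralBinom n := by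
      rw [Nat.centralBinom]; congr 1; omega
    rw [hc]
    push_cast
    calc (Nat.centralBinom n : ℝ) * Real.sqrt (2*n)
        ≤ (Nat.centralBinom n : ℝ) * Real.sqrt (2*n+1) := by
          gcongr
          · push_cast; linarith
      _ ≤ 4^n := cb_real n
      _ = 2^(2*n) := by rw [pow_mul]; norm_num
  · subst hn
    have h2 : (2*n+1)/2 = n := by omega
    rw [h2]
    have hch : Nat.choose (2*n+1) n ≤ 2 * Nat.centralBinom n := by
      cases n with
      | zero => simp [Nat.centralBinom]
      | succ m =>
        rw [show (2*(m+1)+1) = (2*m+2)+1 by ring]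
        rw [Nat.choose_succ_succ]
        have hm1 : Nat.choose (2*m+2) m ≤ Nat.centralBinom (m+1) := by
          have := Nat.choose_le_middle m (2*m+2)
          simpa [Nat.centralBinom, show (2*m+2)/2 = m+1 by omega,
            show 2*(m+1) = 2*m+2 by ring] using this
        have hm2 : Nat.choose (2*m+2) (m+1) = Nat.centralBinom (m+1) := by
          simp [Nat.centralBinom, show 2*(m+1) = 2*m+2 by ring]
        simp only [Nat.succ_eq_add_one]
        omega
    have hcast : ((2*n+1 : ℕ) : ℝ) = 2*(n:ℝ)+1 := by push_cast; ring
    calc (Nat.choose (2*n+1) n : ℝ) * Real.sqrt ((2*n+1 : ℕ))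
        ≤ (2 * Nat.centralBinom n : ℝ) * Real.sqrt ((2*n+1 : ℕ)) := by
          gcongr; exact_mod_cast hch
      _ = 2 * ((Nat.centralBinom n : ℝ) * Real.sqrt (2*(n:ℝ)+1)) := by
          rw [hcast]; push_cast; ring
      _ ≤ 2 * 4^n := by gcongr; exact_mod_cast cb_real n
      _ = 2^(2*n+1) := by rw [pow_succ', pow_mul]; norm_num

section
open Finset

lemma sqrt_ge_12 {T : ℕ} (hT : 144 ≤ T) : 12 ≤ Real.sqrt T := by
  have : (12:ℝ) = Real.sqrt 144 := by
    rw [show (144:ℝ) = 12^2 by norm_num, Real.sqrt_sq (by norm_num)]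
  rw [this]
  exact Real.sqrt_le_sqrt (by exact_mod_cast hT)



lemma count_card_eq (T j : ℕ) :
    (Finset.univ.filter (fun s : Finset (Fin T) => s.card = j)).card = Nat.choose T j := by
  rw [← Fintype.card_subtype]
  rw [Fintype.card_finset_len, Fintype.card_fin]

lemma card_filter_compl (T : ℕ) (P : Finset (Fin T) → Prop) :
    (Finset.univ.filter P).card = (Finset.univ.filter (fun s => P sᶜ)).card := by
  apply Finset.card_nbij' (i := fun s => sᶜ) (j := fun s => sᶜ)
  · intro a ha
    simp only [Finset.mem_coe, Finset.mem_filter, Finset.mem_univ, true_and, compl_compl] at *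
    exact ha
  · intro a ha
    simp only [Finset.mem_coe, Finset.mem_filter, Finset.mem_univ, true_and] at *
    exact ha
  · intro a _; simp
  · intro a _; simp


lemma tail_lo (T : ℕ) (hT : 144 ≤ T) :
    (2:ℝ)^T ≤ 4 * ((Finset.univ.filter
      (fun s : Finset (Fin T) => (s.card:ℝ) ≤ (T:ℝ)/2 - Real.sqrt T/8)).card : ℝ) := by
  have hT0 : (0:ℝ) < T := by exact_mod_cast (by omega : 0 < T)
  set x := Real.sqrt T with hxdef
  have hx2 : x * x = T := Real.mul_self_sqrt (by positivity)
  have hx12 : (12:ℝ) ≤ x := sqrt_ge_12 hT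
  have hx0 : (0:ℝ) < x := by linarith
  set M := Nat.choose T (T/2) with hMdef
  have hM : (M:ℝ) * x ≤ 2^T := mid_le T
  have hM0 : (0:ℝ) ≤ M := by positivity
  have hcount : ∀ j : ℕ, ((Finset.univ.filter
      (fun s : Finset (Fin T) => s.card = j)).card : ℝ) ≤ (M:ℝ) := by
    intro j
    rw [count_card_eq T j]
    exact_mod_cast Nat.choose_le_middle j T
  have hcompl : ∀ s : Finset (Fin T), ((sᶜ.card : ℕ) : ℝ) = (T:ℝ) - s.card := by
    intro s
    have h1 : s.card ≤ T := by simpa using Finset.card_le_univ s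
    rw [Finset.card_compl]
    rw [Fintype.card_fin, Nat.cast_sub h1]
  set L := Finset.univ.filter (fun s : Finset (Fin T) => (s.card:ℝ) < (T:ℝ)/2) with hL
  set Gt := Finset.univ.filter (fun s : Finset (Fin T) => (T:ℝ)/2 < (s.card:ℝ)) with hG
  set Mid := Finset.univ.filter (fun s : Finset (Fin T) => (s.card:ℝ) = (T:ℝ)/2) with hMid
  have hLG : L.card = Gt.card := by
    rw [hL, card_filter_compl]
    congr 1
    apply Finset.filter_congr
    intro s _
    rw [hcompl s]
    constructor <;> intro h <;> linarith
  have hpart1 : L.card + (Finset.univ.filter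
      (fun s : Finset (Fin T) => ¬ ((s.card:ℝ) < (T:ℝ)/2))).card = 2^T := by
    rw [hL, Finset.card_filter_add_card_filter_not, Finset.card_univ,
      Fintype.card_finset, Fintype.card_fin]
  have hpart2 : Mid.card + Gt.card = (Finset.univ.filter
      (fun s : Finset (Fin T) => ¬ ((s.card:ℝ) < (T:ℝ)/2))).card := by
    have key := Finset.card_filter_add_card_filter_not
      (s := Finset.univ.filter (fun s : Finset (Fin T) => ¬ ((s.card:ℝ) < (T:ℝ)/2)))
      (p := fun s : Finset (Fin T) => (s.card:ℝ) = (T:ℝ)/2)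
    have e1 : (Finset.univ.filter (fun s : Finset (Fin T) => ¬ ((s.card:ℝ) < (T:ℝ)/2))).filter
        (fun s : Finset (Fin T) => (s.card:ℝ) = (T:ℝ)/2) = Mid := by
      rw [Finset.filter_filter, hMid]
      apply Finset.filter_congr
      intro s _
      constructor
      · exact fun h => h.2
      · intro h; exact ⟨by linarith, h⟩
    have e2 : (Finset.univ.filter (fun s : Finset (Fin T) => ¬ ((s.card:ℝ) < (T:ℝ)/2))).filter
        (fun s : Finset (Fin T) => ¬ ((s.card:ℝ) = (T:ℝ)/2)) = Gt := by
      rw [Finset.filter_filter, hG]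
      apply Finset.filter_congr
      intro s _
      constructor
      · intro h
        rcases lt_or_eq_of_le (le_of_not_gt h.1) with h' | h'
        · exact h'
        · exact absurd h'.symm h.2
      · intro h; exact ⟨by linarith, by intro h'; linarith⟩
    rw [e1, e2] at key
    exact key
  have hMidM : (Mid.card : ℝ) ≤ M := by
    refine le_trans ?_ (hcount (T/2))
    have hsub : Mid ⊆ Finset.univ.filter (fun s : Finset (Fin T) => s.card = T/2) := by
      intro s hs
      simp only [hMid, Finset.mem_filter, Finset.mem_univ, true_and] at *
      have h2 : ((2 * s.card : ℕ) : ℝ) = (T:ℕ) := by push_cast; linarith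
      have h2' : 2 * s.card = T := by exact_mod_cast h2
      omega
    exact_mod_cast Finset.card_le_card hsub
  -- L is big:  2 * L.card + Mid.card ≥ 2^T
  have hLbig : (2:ℝ)^T ≤ 2 * L.card + (M:ℝ) := by
    have : (L.card : ℝ) + ((Mid.card : ℝ) + Gt.card) = 2^T := by
      exact_mod_cast congrArg (Nat.cast : ℕ → ℝ) (by omega : L.card + (Mid.card + Gt.card) = 2^T)
    have hgl : (Gt.card : ℝ) = L.card := by exact_mod_cast hLG.symm
    linarith
  set A := Finset.univ.filter
    (fun s : Finset (Fin T) => (s.card:ℝ) ≤ (T:ℝ)/2 - x/8) with hA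
  set m₁ := ⌈(T:ℝ)/2 - x/8⌉₊ with hm1
  set J := Finset.Icc m₁ ((T-1)/2) with hJdef
  have hband_sub : L ⊆ A ∪ J.biUnion
      (fun j => Finset.univ.filter (fun s : Finset (Fin T) => s.card = j)) := by
    intro s hs
    rw [hL, Finset.mem_filter] at hs
    by_cases hA' : (s.card:ℝ) ≤ (T:ℝ)/2 - x/8
    · exact Finset.mem_union_left _ (by rw [hA, Finset.mem_filter]; exact ⟨hs.1, hA'⟩)
    · refine Finset.mem_union_right _ (Finset.mem_biUnion.2 ⟨s.card, ?_, ?_⟩)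
      · rw [hJdef, Finset.mem_Icc]
        constructor
        · exact Nat.ceil_le.2 (le_of_lt (not_le.1 hA'))
        · have h2 : ((2 * s.card : ℕ) : ℝ) < (T:ℕ) := by push_cast; linarith [hs.2]
          have h2' : 2 * s.card < T := by exact_mod_cast h2
          omega
      · simp
  have hcard : (L.card:ℝ) ≤ (A.card:ℝ) + (J.card:ℝ) * M := by
    have s1 : L.card ≤ (A ∪ J.biUnion
        (fun j => Finset.univ.filter (fun s : Finset (Fin T) => s.card = j))).card :=
      Finset.card_le_card hband_sub
    have s2 := Finset.card_union_le A (J.biUnion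
      (fun j => Finset.univ.filter (fun s : Finset (Fin T) => s.card = j)))
    have s3 := Finset.card_biUnion_le (s := J)
      (t := fun j => Finset.univ.filter (fun s : Finset (Fin T) => s.card = j))
    have s4 : (∑ j ∈ J, ((Finset.univ.filter
        (fun s : Finset (Fin T) => s.card = j)).card : ℝ)) ≤ (J.card:ℝ) * M := by
      calc (∑ j ∈ J, ((Finset.univ.filter
          (fun s : Finset (Fin T) => s.card = j)).card : ℝ))
          ≤ J.card • (M:ℝ) := Finset.sum_le_card_nsmul J _ (M:ℝ) (fun j _ => hcount j)
        _ = (J.card:ℝ) * M := by rw [nsmul_eq_mul]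
    have c1 : (L.card : ℝ) ≤ (A.card:ℝ) + ((J.biUnion
        (fun j => Finset.univ.filter (fun s : Finset (Fin T) => s.card = j))).card : ℝ) := by
      exact_mod_cast le_trans s1 s2
    refine c1.trans ?_
    have : ((J.biUnion (fun j => Finset.univ.filter
        (fun s : Finset (Fin T) => s.card = j))).card : ℝ)
        ≤ ∑ j ∈ J, ((Finset.univ.filter
        (fun s : Finset (Fin T) => s.card = j)).card : ℝ) := by
      exact_mod_cast s3
    linarith
  have hJcard : (J.card : ℝ) ≤ x/8 + 1 := by
    rw [hJdef, Nat.card_Icc]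
    by_cases hle : m₁ ≤ (T-1)/2 + 1
    · rw [Nat.cast_sub hle]
      have hceil : ((T:ℝ)/2 - x/8) ≤ (m₁:ℝ) := Nat.le_ceil _
      have hdivle : (((T-1)/2 : ℕ) : ℝ) ≤ ((T:ℝ)-1)/2 := by
        calc (((T-1)/2 : ℕ) : ℝ) ≤ ((T-1 : ℕ):ℝ)/2 := Nat.cast_div_le
          _ = ((T:ℝ)-1)/2 := by rw [Nat.cast_sub (by omega)]; norm_num
      push_cast
      linarith
    · have : (T-1)/2 + 1 - m₁ = 0 := by omega
      rw [this]
      simp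
      positivity
  -- final arithmetic
  have hMx : (M:ℝ)*(x/4+3) ≤ (2:ℝ)^T / 2 := by
    have h1 : x/4 + 3 ≤ x/2 := by linarith
    have h2 : (M:ℝ)*(x/4+3) ≤ (M:ℝ)*(x/2) := by
      apply mul_le_mul_of_nonneg_left h1 hM0
    have h3 : (M:ℝ)*(x/2) = ((M:ℝ)*x)/2 := by ring
    linarith
  have hJM : (J.card:ℝ) * M ≤ (x/8+1) * M := mul_le_mul_of_nonneg_right hJcard hM0
  nlinarith [hLbig, hcard, hJM, hMx]

end

/-! ### two-point distributions -/

noncomputable section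

def z₀ : ℝ × ℝ := (1/2, 0)
def z₁ : ℝ × ℝ := (1/2, 1)

lemma z_ne : z₀ ≠ z₁ := by simp [z₀, z₁]

def Dw (a b : ℝ) : (ℝ × ℝ) →₀ ℝ := Finsupp.single z₀ a + Finsupp.single z₁ b

lemma Dw_apply₀ (a b : ℝ) : Dw a b z₀ = a := by
  simp [Dw, Finsupp.single_apply, z_ne, z_ne.symm]

lemma Dw_apply₁ (a b : ℝ) : Dw a b z₁ = b := by
  simp [Dw, Finsupp.single_apply, z_ne, z_ne.symm]

lemma Dw_support (a b : ℝ) : (Dw a b).support ⊆ {z₀, z₁} := by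
  refine (Finsupp.support_add).trans ?_
  apply Finset.union_subset
  · exact (Finsupp.support_single_subset).trans (by simp)
  · exact (Finsupp.support_single_subset).trans (by simp)

/-- sums over the support of a two-point distribution -/
lemma sum_support_two {D : (ℝ × ℝ) →₀ ℝ} (hsupp : D.support ⊆ {z₀, z₁})
    (G : ℝ × ℝ → ℝ) (hG : ∀ z, D z = 0 → G z = 0) :
    ∑ z ∈ D.support, G z = G z₀ + G z₁ := by
  rw [Finset.sum_subset hsupp, Finset.sum_pair z_ne]
  intro x _ hx
  exact hG x (by simpa [Finsupp.mem_support_iff] using hx)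

lemma isDist_Dw {a b : ℝ} (ha : 0 ≤ a) (hb : 0 ≤ b) (hab : a + b = 1) :
    IsDist (Dw a b) := by
  refine ⟨?_, ?_, ?_⟩
  · intro z
    rcases eq_or_ne z z₀ with rfl | h0
    · rw [Dw_apply₀]; exact ha
    rcases eq_or_ne z z₁ with rfl | h1
    · rw [Dw_apply₁]; exact hb
    · have : z ∉ (Dw a b).support := fun h => by
        rcases Finset.mem_insert.1 (Dw_support a b h) with h | h
        · exact h0 h
        · exact h1 (Finset.mem_singleton.1 h)
      simp [Finsupp.notMem_support_iff.1 this]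
  · rw [sum_support_two (Dw_support a b) _ (fun z h => h), Dw_apply₀, Dw_apply₁, hab]
  · intro z hz
    rcases Finset.mem_insert.1 (Dw_support a b hz) with h | h
    · subst h; constructor
      · constructor <;> norm_num [z₀]
      · left; rfl
    · rw [Finset.mem_singleton.1 h]; constructor
      · constructor <;> norm_num [z₁]
      · right; rfl

lemma calibrated_half : CalibratedD (Dw (1/2) (1/2)) := by
  intro v
  have hz : ∀ z : ℝ × ℝ, (Dw (1/2) (1/2)) z = 0 → (if z.1 = v then (Dw (1/2) (1/2)) z * z.2 else 0) = 0 :=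
    fun z h => by rw [h]; simp
  have hz' : ∀ z : ℝ × ℝ, (Dw (1/2) (1/2)) z = 0 → (if z.1 = v then (Dw (1/2) (1/2)) z else 0) = 0 :=
    fun z h => by rw [h]; simp
  rw [sum_support_two (Dw_support _ _) _ hz, sum_support_two (Dw_support _ _) _ hz']
  rw [Dw_apply₀, Dw_apply₁]
  by_cases h : ((1:ℝ)/2) = v
  · subst h; norm_num [z₀, z₁]
  · have h2 : ¬ ((2:ℝ)⁻¹ = v) := by rwa [one_div] at h
    simp [z₀, z₁, h2]

/-- the decision task: guess the bit -/
def Ubit : Fin 2 → ℝ → ℝ := fun a y => if a = 0 then 1 - y else y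

lemma Ubit_mem : ∀ (a : Fin 2) (y : ℝ), (y = 0 ∨ y = 1) → Ubit a y ∈ Set.Icc (0:ℝ) 1 := by
  rintro a y (rfl | rfl) <;> rcases eq_or_ne a 0 with h | h <;> simp [Ubit, h]

/-- lower bounds on swap regret via constant deviations -/
lemma SRD_ge {D : (ℝ × ℝ) →₀ ℝ} (hsupp : D.support ⊆ {z₀, z₁}) (r : ℝ → Fin 2 → ℝ) :
    r (1/2) 1 * (D z₀ - D z₁) ≤ SRD 2 Ubit r D ∧
    r (1/2) 0 * (D z₁ - D z₀) ≤ SRD 2 Ubit r D := by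
  have hbdd : BddAbove (Set.range fun σ : Fin 2 → Fin 2 =>
      ∑ z ∈ D.support, D z * ∑ a : Fin 2, r z.1 a * (Ubit (σ a) z.2 - Ubit a z.2)) :=
    (Set.finite_range _).bddAbove
  constructor
  · have := le_ciSup hbdd (fun _ => (0 : Fin 2))
    refine le_trans (le_of_eq ?_) this
    rw [sum_support_two hsupp _ (fun z h => by simp [h])]
    simp [z₀, z₁, Ubit, Fin.sum_univ_two]
    ring
  · have := le_ciSup hbdd (fun _ => (1 : Fin 2))
    refine le_trans (le_of_eq ?_) this
    rw [sum_support_two hsupp _ (fun z h => by simp [h])]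
    simp [z₀, z₁, Ubit, Fin.sum_univ_two]
    ring

end

noncomputable section
open Finset


lemma cast_card_compl {T : ℕ} (s : Finset (Fin T)) : ((sᶜ.card : ℕ) : ℝ) = (T:ℝ) - s.card := by
  have h1 : s.card ≤ T := by simpa using Finset.card_le_univ s
  rw [Finset.card_compl, Fintype.card_fin, Nat.cast_sub h1]

lemma tail_hi' (T : ℕ) (hT : 144 ≤ T) :
    (2:ℝ)^T ≤ 4 * ((Finset.univ.filter
      (fun s : Finset (Fin T) => (T:ℝ)/2 + Real.sqrt T/8 ≤ (s.card:ℝ))).card : ℝ) := by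
  refine le_trans (tail_lo T hT) ?_
  have : ((Finset.univ.filter
      (fun s : Finset (Fin T) => (s.card:ℝ) ≤ (T:ℝ)/2 - Real.sqrt T/8)).card : ℕ)
      = ((Finset.univ.filter
      (fun s : Finset (Fin T) => (T:ℝ)/2 + Real.sqrt T/8 ≤ (s.card:ℝ))).card : ℕ) := by
    rw [card_filter_compl]
    congr 1
    apply Finset.filter_congr
    intro s _
    rw [cast_card_compl s]
    constructor <;> intro h <;> linarith
  rw [this]

/-- the empirical distribution of a two-valued sample -/
lemma empDist_eq (T : ℕ) (hT : 0 < T) (g : Fin T → ℝ × ℝ) (hg : ∀ t, g t = z₀ ∨ g t = z₁) :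
    empDist T g = Dw (((T:ℝ) - (Finset.univ.filter (fun t => g t = z₁)).card)/T)
      (((Finset.univ.filter (fun t => g t = z₁)).card : ℝ)/T) := by
  classical
  have hsplit := Finset.sum_filter_add_sum_filter_not Finset.univ
    (fun t => g t = z₁) (fun t => Finsupp.single (g t) ((T : ℝ)⁻¹))
  rw [empDist, ← hsplit]
  have h1 : ∑ t ∈ Finset.univ.filter (fun t => g t = z₁),
      Finsupp.single (g t) ((T : ℝ)⁻¹)
      = Finsupp.single z₁ (((Finset.univ.filter (fun t => g t = z₁)).card : ℝ)/T) := by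
    rw [Finset.sum_congr rfl (fun t ht => by
      rw [(Finset.mem_filter.1 ht).2])]
    rw [Finset.sum_const, Finsupp.smul_single, nsmul_eq_mul, div_eq_mul_inv]
  have h2 : ∑ t ∈ Finset.univ.filter (fun t => ¬ g t = z₁),
      Finsupp.single (g t) ((T : ℝ)⁻¹)
      = Finsupp.single z₀ (((T:ℝ) - (Finset.univ.filter (fun t => g t = z₁)).card)/T) := by
    rw [Finset.sum_congr rfl (fun t ht => by
      rcases hg t with h | h
      · rw [h]
      · exact absurd h (Finset.mem_filter.1 ht).2)]
    rw [Finset.sum_const, Finsupp.smul_single, nsmul_eq_mul, div_eq_mul_inv]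
    congr 1
    have hcc := Finset.card_filter_add_card_filter_not
      (s := (Finset.univ : Finset (Fin T))) (p := fun t => g t = z₁)
    rw [Finset.card_univ, Fintype.card_fin] at hcc
    have : ((Finset.univ.filter (fun t => ¬ g t = z₁)).card : ℝ)
        = (T:ℝ) - (Finset.univ.filter (fun t => g t = z₁)).card := by
      have h3 : (Finset.univ.filter (fun t => ¬ g t = z₁)).card
          = T - (Finset.univ.filter (fun t => g t = z₁)).card := by omega
      rw [h3, Nat.cast_sub (by omega)]
    rw [this]
  rw [h1, h2, Dw, add_comm]

lemma mem_supp₀ : z₀ ∈ (Dw (1/2:ℝ) (1/2)).support := by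
  rw [Finsupp.mem_support_iff, Dw_apply₀]; norm_num

lemma mem_supp₁ : z₁ ∈ (Dw (1/2:ℝ) (1/2)).support := by
  rw [Finsupp.mem_support_iff, Dw_apply₁]; norm_num

def sampleEquiv (T : ℕ) :
    Finset (Fin T) ≃ (Fin T → {z : ℝ × ℝ // z ∈ (Dw (1/2:ℝ) (1/2)).support}) where
  toFun := fun s t => if t ∈ s then ⟨z₁, mem_supp₁⟩ else ⟨z₀, mem_supp₀⟩
  invFun := fun f => Finset.univ.filter (fun t => f t = ⟨z₁, mem_supp₁⟩)
  left_inv := by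
    intro s
    ext t
    by_cases h : t ∈ s <;> simp [h, Subtype.ext_iff, z_ne, z_ne.symm]
  right_inv := by
    intro f
    funext t
    by_cases h : f t = ⟨z₁, mem_supp₁⟩
    · simp [h]
    · have hmem := (f t).2
      have : (f t : ℝ × ℝ) = z₀ := by
        rcases Finset.mem_insert.1 (Dw_support (1/2:ℝ) (1/2) hmem) with h' | h'
        · exact h'
        · exact absurd (Subtype.ext (Finset.mem_singleton.1 h')) h
      simp only [Finset.mem_filter, Finset.mem_univ, true_and]
      rw [if_neg h]
      exact (Subtype.ext this).symm

lemma expectedCAL_eq (T : ℕ) (hT : 0 < T) (CAL : ((ℝ × ℝ) →₀ ℝ) → ℝ) :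
    expectedCAL T CAL (Dw (1/2:ℝ) (1/2)) = ∑ s : Finset (Fin T),
      (1/2:ℝ)^T * CAL (Dw (((T:ℝ) - s.card)/T) ((s.card:ℝ)/T)) := by
  classical
  rw [expectedCAL, ← Equiv.sum_comp (sampleEquiv T)]
  apply Finset.sum_congr rfl
  intro s _
  have hg : ∀ t, ((sampleEquiv T s t : ℝ × ℝ)) = z₀ ∨ ((sampleEquiv T s t : ℝ × ℝ)) = z₁ := by
    intro t
    by_cases h : t ∈ s <;> simp [sampleEquiv, h]
  have hfil : Finset.univ.filter (fun t => ((sampleEquiv T s t : ℝ × ℝ)) = z₁) = s := by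
    ext t
    simp only [Finset.mem_filter, Finset.mem_univ, true_and]
    by_cases h : t ∈ s <;> simp [sampleEquiv, h, z_ne, z_ne.symm]
  congr 1
  · rw [Finset.prod_congr rfl (fun t _ => show (Dw (1/2:ℝ) (1/2)) ((sampleEquiv T s t : ℝ × ℝ))
        = 1/2 from by rcases hg t with h | h <;> rw [h] <;> [exact Dw_apply₀ _ _; exact Dw_apply₁ _ _])]
    rw [Finset.prod_const, Finset.card_univ, Fintype.card_fin]
  · rw [empDist_eq T hT _ hg, hfil]


set_option maxHeartbeats 2000000 in
/-- any nonnegative calibration measure `CAL_T` that is (1) actionable —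
for every bounded-utility decision task and every `α ≥ 0` there is a randomized
response (independent of the distribution) achieving swap regret `≤ α` on every
distribution with `CAL_T ≤ α` — and (2) `ε(T)`-testable on calibrated distributions —
the expected value of `CAL_T` on the empirical distribution of `T` i.i.d. samples from
any calibrated distribution is at most `ε(T)` — must have `ε(T) ≥ c·T^{-1/2}`. -/
theorem testable_actionable_lower_bound :
    ∃ c : ℝ, 0 < c ∧
      ∀ (T : ℕ), 0 < T → ∀ (CAL : ((ℝ × ℝ) →₀ ℝ) → ℝ) (ε : ℝ),
        (∀ D, IsDist D → 0 ≤ CAL D) →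
        (∀ (n : ℕ) (U : Fin n → ℝ → ℝ),
          (∀ a y, (y = 0 ∨ y = 1) → U a y ∈ Set.Icc (0:ℝ) 1) →
          ∀ α : ℝ, 0 ≤ α → ∃ r : ℝ → Fin n → ℝ,
            (∀ p a, 0 ≤ r p a) ∧ (∀ p, ∑ a : Fin n, r p a = 1) ∧
            ∀ D, IsDist D → CAL D ≤ α → SRD n U r D ≤ α) →
        (∀ D, IsDist D → CalibratedD D → expectedCAL T CAL D ≤ ε) →
        c / Real.sqrt T ≤ ε := by
  classical
  refine ⟨1/2^146, by positivity, ?_⟩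
  intro T hT CAL ε hpos hact htest
  have hT0 : (0:ℝ) < T := by exact_mod_cast hT
  have hs0 : 0 < Real.sqrt T := Real.sqrt_pos.2 hT0
  have hx1 : 1 ≤ Real.sqrt T := by
    rw [show (1:ℝ) = Real.sqrt 1 by simp]
    exact Real.sqrt_le_sqrt (by exact_mod_cast hT)
  set SD : Finset (Fin T) → ((ℝ × ℝ) →₀ ℝ) :=
    fun s => Dw (((T:ℝ) - s.card)/T) ((s.card:ℝ)/T) with hSD
  have hcardle : ∀ s : Finset (Fin T), (s.card:ℝ) ≤ T := by
    intro s
    exact_mod_cast (by simpa using Finset.card_le_univ s : s.card ≤ T)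
  have hSDdist : ∀ s, IsDist (SD s) := by
    intro s
    apply isDist_Dw
    · apply div_nonneg _ hT0.le
      linarith [hcardle s]
    · positivity
    · field_simp
      ring
  have hCAL0 : ∀ s, 0 ≤ CAL (SD s) := fun s => hpos _ (hSDdist s)
  have hexp : ∑ s : Finset (Fin T), (1/2:ℝ)^T * CAL (SD s) ≤ ε := by
    rw [hSD, ← expectedCAL_eq T hT CAL]
    exact htest _ (isDist_Dw (by norm_num) (by norm_num) (by norm_num)) calibrated_half
  have hp0 : (0:ℝ) < (1/2:ℝ)^T := by positivity
  have h21 : (2:ℝ)^T * (1/2:ℝ)^T = 1 := by rw [← mul_pow]; norm_num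
  have hε0 : 0 ≤ ε :=
    le_trans (Finset.sum_nonneg (fun s _ => mul_nonneg hp0.le (hCAL0 s))) hexp
  -- values of SD
  have hSD₀ : ∀ s : Finset (Fin T), SD s z₀ = ((T:ℝ) - s.card)/T := fun s => Dw_apply₀ _ _
  have hSD₁ : ∀ s : Finset (Fin T), SD s z₁ = (s.card:ℝ)/T := fun s => Dw_apply₁ _ _
  have hsupp : ∀ s : Finset (Fin T), (SD s).support ⊆ {z₀, z₁} := fun s => Dw_support _ _
  by_cases hbig : 144 ≤ T
  · -- main case
    obtain ⟨r, hr0, hr1, hrG⟩ := hact 2 Ubit Ubit_mem (8 * ε) (by positivity)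
    have hq := hr1 (1/2)
    rw [Fin.sum_univ_two] at hq
    set bad := Finset.univ.filter (fun s : Finset (Fin T) => ¬ CAL (SD s) ≤ 8 * ε) with hbad
    have hbadcard : (bad.card : ℝ) ≤ 2^T / 8 := by
      rcases hε0.eq_or_lt with heq | hεpos
      · have hsum0 : ∑ s : Finset (Fin T), (1/2:ℝ)^T * CAL (SD s) = 0 :=
          le_antisymm (heq ▸ hexp)
            (Finset.sum_nonneg (fun s _ => mul_nonneg hp0.le (hCAL0 s)))
        have hall : ∀ s : Finset (Fin T), CAL (SD s) = 0 := by
          intro s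
          have := (Finset.sum_eq_zero_iff_of_nonneg
            (fun s' _ => mul_nonneg hp0.le (hCAL0 s'))).1 hsum0 s (Finset.mem_univ s)
          exact (mul_eq_zero.1 this).resolve_left (ne_of_gt hp0)
        have hbe : bad = ∅ := by
          rw [hbad, Finset.filter_eq_empty_iff]
          intro s _
          rw [hall s]
          push_neg
          positivity
        rw [hbe]
        simp
        positivity
      · have h8 : ∀ s ∈ bad, 8 * ε ≤ CAL (SD s) := fun s hs =>
          le_of_lt (not_le.1 (Finset.mem_filter.1 hs).2)
        have hsumbad : (bad.card : ℝ) * ((1/2)^T * (8*ε)) ≤ ε := by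
          calc (bad.card:ℝ) * ((1/2)^T * (8*ε))
              = ∑ _s ∈ bad, (1/2:ℝ)^T * (8*ε) := by rw [Finset.sum_const, nsmul_eq_mul]
            _ ≤ ∑ s ∈ bad, (1/2:ℝ)^T * CAL (SD s) :=
                Finset.sum_le_sum (fun s hs => mul_le_mul_of_nonneg_left (h8 s hs) hp0.le)
            _ ≤ ∑ s : Finset (Fin T), (1/2:ℝ)^T * CAL (SD s) :=
                Finset.sum_le_sum_of_subset_of_nonneg (Finset.subset_univ bad)
                  (fun s _ _ => mul_nonneg hp0.le (hCAL0 s))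
            _ ≤ ε := hexp
        have step1 : (bad.card:ℝ) * (1/2)^T ≤ 1/8 := by
          nlinarith [hsumbad, hεpos]
        calc (bad.card:ℝ) = ((bad.card:ℝ) * (1/2)^T) * 2^T := by
              rw [mul_assoc, mul_comm ((1/2:ℝ)^T), h21, mul_one]
          _ ≤ (1/8) * 2^T := mul_le_mul_of_nonneg_right step1 (by positivity)
          _ = 2^T/8 := by ring
    have find : ∀ A : Finset (Finset (Fin T)), (2:ℝ)^T ≤ 4 * A.card →
        ∃ s ∈ A, CAL (SD s) ≤ 8*ε := by
      intro A hA
      by_contra h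
      push_neg at h
      have hsub : A ⊆ bad := fun s hs => by
        rw [hbad, Finset.mem_filter]
        exact ⟨Finset.mem_univ s, not_le.2 (h s hs)⟩
      have hAb : (A.card:ℝ) ≤ bad.card := by exact_mod_cast Finset.card_le_card hsub
      have h2T : (0:ℝ) < 2^T := by positivity
      linarith
    set x := Real.sqrt T with hx
    have hx2 : x * x = T := Real.mul_self_sqrt hT0.le
    have hx12 : (12:ℝ) ≤ x := sqrt_ge_12 hbig
    rw [div_le_iff₀ hs0]
    by_cases hq1 : (1:ℝ)/2 ≤ r (1/2) 1
    · obtain ⟨s, hsA, hsCAL⟩ := find _ (tail_lo T hbig)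
      have hk : (s.card:ℝ) ≤ (T:ℝ)/2 - x/8 := (Finset.mem_filter.1 hsA).2
      have hub := hrG (SD s) (hSDdist s) hsCAL
      have hlb := (SRD_ge (hsupp s) r).1
      have hd : SD s z₀ - SD s z₁ = ((T:ℝ) - 2*s.card)/T := by
        rw [hSD₀, hSD₁]; ring
      rw [hd] at hlb
      have key : r (1/2) 1 * (((T:ℝ) - 2*s.card)/T) ≤ 8*ε := le_trans hlb hub
      have hTk : x/4 ≤ (T:ℝ) - 2*s.card := by linarith
      have h1 : x/4/T ≤ ((T:ℝ) - 2*s.card)/T := by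
        gcongr
      have h2 : 1/2 * (x/4/T) ≤ 8*ε := by
        refine le_trans ?_ key
        apply mul_le_mul hq1 h1 (by positivity) (hr0 _ _)
      have h3 : x/4/(T:ℝ) = 1/(4*x) := by
        rw [← hx2]
        field_simp
      rw [h3] at h2
      have h4 : x * (1/2 * (1/(4*x))) = 1/8 := by
        field_simp
        ring
      have h5 := mul_le_mul_of_nonneg_left h2 hs0.le
      rw [h4] at h5
      nlinarith [h5]
    · obtain ⟨s, hsA, hsCAL⟩ := find _ (tail_hi' T hbig)
      have hk : (T:ℝ)/2 + x/8 ≤ s.card := (Finset.mem_filter.1 hsA).2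
      have hub := hrG (SD s) (hSDdist s) hsCAL
      have hlb := (SRD_ge (hsupp s) r).2
      have hd : SD s z₁ - SD s z₀ = (2*(s.card:ℝ) - T)/T := by
        rw [hSD₀, hSD₁]; ring
      rw [hd] at hlb
      have key : r (1/2) 0 * ((2*(s.card:ℝ) - T)/T) ≤ 8*ε := le_trans hlb hub
      have hq0 : (1:ℝ)/2 ≤ r (1/2) 0 := by
        have := hr0 (1/2) 1
        push_neg at hq1
        linarith
      have hTk : x/4 ≤ 2*(s.card:ℝ) - T := by linarith
      have h1 : x/4/T ≤ (2*(s.card:ℝ) - T)/T := by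
        gcongr
      have h2 : 1/2 * (x/4/T) ≤ 8*ε := by
        refine le_trans ?_ key
        apply mul_le_mul hq0 h1 (by positivity) (hr0 _ _)
      have h3 : x/4/(T:ℝ) = 1/(4*x) := by
        rw [← hx2]
        field_simp
      rw [h3] at h2
      have h4 : x * (1/2 * (1/(4*x))) = 1/8 := by
        field_simp
        ring
      have h5 := mul_le_mul_of_nonneg_left h2 hs0.le
      rw [h4] at h5
      nlinarith [h5]
  · -- small T
    obtain ⟨r, hr0, hr1, hrG⟩ := hact 2 Ubit Ubit_mem (2^T * ε) (by positivity)
    have hq := hr1 (1/2)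
    rw [Fin.sum_univ_two] at hq
    have hone : ∀ s : Finset (Fin T), CAL (SD s) ≤ 2^T * ε := by
      intro s
      have hle : (1/2:ℝ)^T * CAL (SD s) ≤ ε :=
        le_trans (Finset.single_le_sum (f := fun s' => (1/2:ℝ)^T * CAL (SD s'))
          (fun s' _ => mul_nonneg hp0.le (hCAL0 s')) (Finset.mem_univ s)) hexp
      calc CAL (SD s) = (2:ℝ)^T * ((1/2)^T * CAL (SD s)) := by
            rw [← mul_assoc, h21, one_mul]
        _ ≤ 2^T * ε := mul_le_mul_of_nonneg_left hle (by positivity)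
    have hub0 := hrG (SD ∅) (hSDdist ∅) (hone ∅)
    have hub1 := hrG (SD Finset.univ) (hSDdist Finset.univ) (hone Finset.univ)
    have hlb0 := (SRD_ge (hsupp ∅) r).1
    have hlb1 := (SRD_ge (hsupp Finset.univ) r).2
    have he0 : SD ∅ z₀ - SD ∅ z₁ = 1 := by
      rw [hSD₀, hSD₁]
      simp
      simp [hT0.ne', hT.ne']
    have he1 : SD Finset.univ z₁ - SD Finset.univ z₀ = 1 := by
      rw [hSD₀, hSD₁, Finset.card_univ, Fintype.card_fin]
      field_simp
      norm_num
    rw [he0] at hlb0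
    rw [he1] at hlb1
    have hq1b : r (1/2) 1 ≤ 2^T * ε := by
      calc r (1/2) 1 = r (1/2) 1 * 1 := by ring
        _ ≤ SRD 2 Ubit r (SD ∅) := hlb0
        _ ≤ 2^T * ε := hub0
    have hq0b : r (1/2) 0 ≤ 2^T * ε := by
      calc r (1/2) 0 = r (1/2) 0 * 1 := by ring
        _ ≤ SRD 2 Ubit r (SD Finset.univ) := hlb1
        _ ≤ 2^T * ε := hub1
    have hpow : (2:ℝ)^T ≤ 2^143 := by
      apply pow_le_pow_right₀ (by norm_num)
      omega
    have h144 : (1:ℝ) ≤ 2^144 * ε := by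
      have : (1:ℝ) ≤ 2 * (2^T * ε) := by linarith
      have h2 : 2 * ((2:ℝ)^T * ε) ≤ 2 * (2^143 * ε) := by nlinarith
      calc (1:ℝ) ≤ 2 * (2^143 * ε) := by linarith
        _ = 2^144 * ε := by ring
    calc (1:ℝ)/2^146 / Real.sqrt T ≤ 1/2^146 := by
          apply div_le_self (by positivity) hx1
      _ ≤ ε := by nlinarith
end
end
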